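/- arXiv:1112.3403 — 2 statements merged into one kernel-verified Lean document; each statement's English description precedes it below -/
import Mathlib

section
/- The periodic gl(1|1) Hamiltonian takes the almost-diagonal form exhibiting its rank-two Jordan structure: as operators on H = (ℂ²)^{⊗N}, −Σ_{j=1}^{N} e_j = 2 Σ_{n=1}^{L−1} sin(nπ/L)·(χ†_{nπ/L} χ_{nπ/L} − η†_{nπ/L} η_{nπ/L}) + 4 χ₀† η₀. -/
open Complex Matrix

noncomputable section

namespace SpinChain

/-- The state space of the `N`-site spin chain, `(ℂ²)^{⊗N}` realised as functions on
spin configurations. -/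
abbrev V (N : ℕ) := (Fin N → Fin 2) → ℂ

/-- Operators on the spin chain, realised as matrices. -/
abbrev Op (N : ℕ) := Matrix (Fin N → Fin 2) (Fin N → Fin 2) ℂ

def sigmaX : Matrix (Fin 2) (Fin 2) ℂ := !![0, 1; 1, 0]
def sigmaY : Matrix (Fin 2) (Fin 2) ℂ := !![0, -I; I, 0]
def sigmaZ : Matrix (Fin 2) (Fin 2) ℂ := !![1, 0; 0, -1]
def sigmaPlus : Matrix (Fin 2) (Fin 2) ℂ := ((1 : ℂ)/2) • (sigmaX + I • sigmaY)
def sigmaMinus : Matrix (Fin 2) (Fin 2) ℂ := ((1 : ℂ)/2) • (sigmaX - I • sigmaY)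

variable (N : ℕ)

/-- The operator acting as the 2×2 matrix `a` on the `j`-th tensor factor and as the
identity on the others. -/
def site (a : Matrix (Fin 2) (Fin 2) ℂ) (j : Fin N) : Op N :=
  Matrix.of fun x y =>
    a (x j) (y j) * ∏ k ∈ Finset.univ.filter (fun k => k ≠ j), (if x k = y k then (1 : ℂ) else 0)

/-- Jordan–Wigner string `∏_{k<j} diag(z 0, z 1)_k`. -/
def string (z : Fin 2 → ℂ) (j : Fin N) : Op N :=
  (((List.finRange N).filter (fun k => decide (k < j))).map
    (fun k => site N (Matrix.diagonal z) k)).prod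

/-- Jordan–Wigner fermion `c_j := i^{1−j}·(∏_{k<j} diag(−i,i)_k)·σ⁻_j`; here the index
`j : Fin N` labels the physical site `j+1`. -/
def c (j : Fin N) : Op N :=
  (I ^ (-(j : ℤ))) • (string N ![-I, I] j * site N sigmaMinus j)

/-- Jordan–Wigner fermion `c_j† := i^{j−1}·(∏_{k<j} diag(i,−i)_k)·σ⁺_j`. -/
def cd (j : Fin N) : Op N :=
  (I ^ ((j : ℕ))) • (string N ![I, -I] j * site N sigmaPlus j)

/-- The `gl(1|1)` fermion `f_j := i^j c_j` (physical index `j = j.val + 1`). -/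
def f (j : Fin N) : Op N := (I ^ ((j : ℕ) + 1)) • c N j

/-- The `gl(1|1)` fermion `f_j† := i^j c_j†`. -/
def fd (j : Fin N) : Op N := (I ^ ((j : ℕ) + 1)) • cd N j

/-- Cyclic successor on site indices. -/
def fsucc {N : ℕ} (j : Fin N) : Fin N := ⟨(j.val + 1) % N, Nat.mod_lt _ j.pos⟩

/-- Periodic Temperley–Lieb generators
`e_j = (f_j+f_{j+1})(f_j†+f_{j+1}†)`, with `e_N = (f_N+f_1)(f_N†+f_1†)`. -/
def e (j : Fin N) : Op N := (f N j + f N (fsucc j)) * (fd N j + fd N (fsucc j))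

/-- `F_(m) := Σ_{j_1<⋯<j_m} f_{j_1}⋯f_{j_m}`. -/
def Fg (m : ℕ) : Op N :=
  ∑ s ∈ Finset.univ.powersetCard m, ((s.sort (· ≤ ·)).map (f N)).prod

/-- `F†_(m) := Σ_{j_1<⋯<j_m} f†_{j_1}⋯f†_{j_m}`. -/
def Fdg (m : ℕ) : Op N :=
  ∑ s ∈ Finset.univ.powersetCard m, ((s.sort (· ≤ ·)).map (fd N)).prod

/-- `S^z := (1/2) Σ_j σ^z_j`. -/
def Sz : Op N := ((1 : ℂ)/2) • ∑ j : Fin N, site N sigmaZ j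


/-- `θ_p := N^{−1/2} Σ_{k=1}^N e^{−ikp} c_k`. -/
def theta (p : ℝ) : Op N :=
  ((Real.sqrt N : ℂ))⁻¹ • ∑ k : Fin N, Complex.exp (-(I * ((k : ℕ) + 1) * (p : ℂ))) • c N k

/-- `θ_p† := N^{−1/2} Σ_{k=1}^N e^{ikp} c_k†`. -/
def thetad (p : ℝ) : Op N :=
  ((Real.sqrt N : ℂ))⁻¹ • ∑ k : Fin N, Complex.exp (I * ((k : ℕ) + 1) * (p : ℂ)) • cd N k

/-- `χ_p := 2^{−1/2}(cot(p/2)^{1/2} θ_{p−π/2} + tan(p/2)^{1/2} θ_{p+π/2})`. -/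
def chi (p : ℝ) : Op N :=
  ((Real.sqrt 2 : ℂ))⁻¹ • ((Real.sqrt (Real.cot (p/2)) : ℂ) • theta N (p - Real.pi/2)
    + (Real.sqrt (Real.tan (p/2)) : ℂ) • theta N (p + Real.pi/2))

/-- `χ_p† := 2^{−1/2}(tan(p/2)^{1/2} θ†_{p−π/2} + cot(p/2)^{1/2} θ†_{p+π/2})`. -/
def chid (p : ℝ) : Op N :=
  ((Real.sqrt 2 : ℂ))⁻¹ • ((Real.sqrt (Real.tan (p/2)) : ℂ) • thetad N (p - Real.pi/2)
    + (Real.sqrt (Real.cot (p/2)) : ℂ) • thetad N (p + Real.pi/2))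

/-- `η_p := 2^{−1/2}(cot(p/2)^{1/2} θ_{p−π/2} − tan(p/2)^{1/2} θ_{p+π/2})`. -/
def eta (p : ℝ) : Op N :=
  ((Real.sqrt 2 : ℂ))⁻¹ • ((Real.sqrt (Real.cot (p/2)) : ℂ) • theta N (p - Real.pi/2)
    - (Real.sqrt (Real.tan (p/2)) : ℂ) • theta N (p + Real.pi/2))

/-- `η_p† := 2^{−1/2}(tan(p/2)^{1/2} θ†_{p−π/2} − cot(p/2)^{1/2} θ†_{p+π/2})`. -/
def etad (p : ℝ) : Op N :=
  ((Real.sqrt 2 : ℂ))⁻¹ • ((Real.sqrt (Real.tan (p/2)) : ℂ) • thetad N (p - Real.pi/2)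
    - (Real.sqrt (Real.cot (p/2)) : ℂ) • thetad N (p + Real.pi/2))

def T (A : Fin N → Matrix (Fin 2) (Fin 2) ℂ) : Op N :=
  Matrix.of fun x y => ∏ k, A k (x k) (y k)

lemma T_mul (A B : Fin N → Matrix (Fin 2) (Fin 2) ℂ) :
    T N A * T N B = T N fun k => A k * B k := by
  ext x y
  simp only [Matrix.mul_apply, T, Matrix.of_apply]
  have h : ∀ z : Fin N → Fin 2,
      (∏ k, A k (x k) (z k)) * ∏ k, B k (z k) (y k)
        = ∏ k, (A k (x k) (z k) * B k (z k) (y k)) :=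
    fun z => (Finset.prod_mul_distrib).symm
  simp only [h]
  exact (Fintype.prod_sum fun k i => A k (x k) i * B k i (y k)).symm

lemma T_one : T N (fun _ => 1) = 1 := by
  ext x y
  simp only [T, Matrix.of_apply, Matrix.one_apply]
  by_cases h : x = y
  · subst h; simp [Matrix.one_apply]
  · obtain ⟨k, hk⟩ := Function.ne_iff.mp h
    rw [if_neg h]
    exact Finset.prod_eq_zero (Finset.mem_univ k) (by simp [Matrix.one_apply, hk])

lemma T_eq_zero (A : Fin N → Matrix (Fin 2) (Fin 2) ℂ) (m : Fin N) (hm : A m = 0) :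
    T N A = 0 := by
  ext x y
  simp only [T, Matrix.of_apply, Matrix.zero_apply]
  exact Finset.prod_eq_zero (Finset.mem_univ m) (by simp [hm])

lemma T_add_slot (A B : Fin N → Matrix (Fin 2) (Fin 2) ℂ) (m : Fin N)
    (h : ∀ k, k ≠ m → A k = B k) :
    T N A + T N B = T N fun k => if k = m then A m + B m else A k := by
  ext x y
  simp only [T, Matrix.of_apply, Matrix.add_apply]
  have e1 : ∏ k, A k (x k) (y k)
      = A m (x m) (y m) * ∏ k ∈ Finset.univ.erase m, A k (x k) (y k) :=
    (Finset.mul_prod_erase _ _ (Finset.mem_univ m)).symm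
  have e2 : ∏ k, B k (x k) (y k)
      = B m (x m) (y m) * ∏ k ∈ Finset.univ.erase m, A k (x k) (y k) := by
    rw [← Finset.mul_prod_erase _ _ (Finset.mem_univ m)]
    congr 1
    exact Finset.prod_congr rfl fun k hk => by
      rw [h k (Finset.ne_of_mem_erase hk)]
  have e3 : ∏ k, (if k = m then A m + B m else A k) (x k) (y k)
      = (A m (x m) (y m) + B m (x m) (y m)) * ∏ k ∈ Finset.univ.erase m,
          A k (x k) (y k) := by
    rw [← Finset.mul_prod_erase _ _ (Finset.mem_univ m), if_pos rfl, Matrix.add_apply]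
    congr 1
    exact Finset.prod_congr rfl fun k hk => by
      rw [if_neg (Finset.ne_of_mem_erase hk)]
  rw [e1, e2, e3]; ring


-- new material
lemma site_eq_T (a : Matrix (Fin 2) (Fin 2) ℂ) (j : Fin N) :
    site N a j = T N fun k => if k = j then a else 1 := by
  ext x y
  simp only [site, T, Matrix.of_apply]
  rw [← Finset.mul_prod_erase _ _ (Finset.mem_univ j), if_pos rfl]
  congr 1
  rw [show Finset.univ.filter (fun k => k ≠ j) = Finset.univ.erase j by
    ext k; simp [Finset.mem_erase, and_comm]]
  exact Finset.prod_congr rfl fun k hk => by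
    rw [if_neg (Finset.ne_of_mem_erase hk), Matrix.one_apply]

lemma prod_site_diag (z : Fin 2 → ℂ) :
    ∀ (l : List (Fin N)), l.Nodup →
      (l.map fun k => site N (Matrix.diagonal z) k).prod
        = T N fun k => if k ∈ l then Matrix.diagonal z else 1
  | [], _ => by simp [T_one]
  | a :: l, h => by
    rw [List.map_cons, List.prod_cons, prod_site_diag z l (List.nodup_cons.mp h).2,
      site_eq_T, T_mul]
    refine congrArg (T N) (funext fun k => ?_)
    by_cases hk : k = a
    · subst hk
      simp [(List.nodup_cons.mp h).1]
    · simp [hk]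

lemma string_eq_T (z : Fin 2 → ℂ) (j : Fin N) :
    string N z j = T N fun k => if k < j then Matrix.diagonal z else 1 := by
  rw [string, prod_site_diag N z _ ((List.nodup_finRange N).filter _)]
  refine congrArg (T N) (funext fun k => ?_)
  simp [List.mem_filter, List.mem_finRange]


def mDM : Matrix (Fin 2) (Fin 2) ℂ := Matrix.diagonal ![-I, I]
def mDP : Matrix (Fin 2) (Fin 2) ℂ := Matrix.diagonal ![I, -I]

lemma sigmaPlus_eq : sigmaPlus = !![0, 1; 0, 0] := by
  ext i j
  fin_cases i <;> fin_cases j <;>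
    simp [sigmaPlus, sigmaX, sigmaY] <;> ring_nf <;> simp [Complex.I_sq] <;> ring

lemma sigmaMinus_eq : sigmaMinus = !![0, 0; 1, 0] := by
  ext i j
  fin_cases i <;> fin_cases j <;>
    simp [sigmaMinus, sigmaX, sigmaY] <;> ring_nf <;> simp [Complex.I_sq] <;> ring

lemma mDM_eq : mDM = !![-I, 0; 0, I] := by
  ext i j; fin_cases i <;> fin_cases j <;> simp [mDM, Matrix.diagonal]

lemma mDP_eq : mDP = !![I, 0; 0, -I] := by
  ext i j; fin_cases i <;> fin_cases j <;> simp [mDP, Matrix.diagonal]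

lemma mDM_mul_mDP : mDM * mDP = 1 := by
  rw [mDM_eq, mDP_eq]
  ext i j
  fin_cases i <;> fin_cases j <;>
    simp [Matrix.mul_apply, Fin.sum_univ_two, Matrix.one_apply] <;> ring_nf <;>
    simp [Complex.I_sq]

lemma mDP_mul_mDM : mDP * mDM = 1 := by
  rw [mDM_eq, mDP_eq]
  ext i j
  fin_cases i <;> fin_cases j <;>
    simp [Matrix.mul_apply, Fin.sum_univ_two, Matrix.one_apply] <;> ring_nf <;>
    simp [Complex.I_sq]

lemma sm_sp_anticomm : sigmaMinus * sigmaPlus + sigmaPlus * sigmaMinus = 1 := by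
  rw [sigmaMinus_eq, sigmaPlus_eq]
  ext i j
  fin_cases i <;> fin_cases j <;>
    simp [Matrix.mul_apply, Fin.sum_univ_two, Matrix.one_apply]

lemma sm_mDP_anticomm : sigmaMinus * mDP + mDP * sigmaMinus = 0 := by
  rw [sigmaMinus_eq, mDP_eq]
  ext i j
  fin_cases i <;> fin_cases j <;>
    simp [Matrix.mul_apply, Fin.sum_univ_two]

lemma sp_mDM_anticomm : sigmaPlus * mDM + mDM * sigmaPlus = 0 := by
  rw [sigmaPlus_eq, mDM_eq]
  ext i j
  fin_cases i <;> fin_cases j <;>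
    simp [Matrix.mul_apply, Fin.sum_univ_two]


def CF (j : Fin N) : Fin N → Matrix (Fin 2) (Fin 2) ℂ :=
  fun k => if k < j then mDM else if k = j then sigmaMinus else 1
def CdF (j : Fin N) : Fin N → Matrix (Fin 2) (Fin 2) ℂ :=
  fun k => if k < j then mDP else if k = j then sigmaPlus else 1

lemma c_eq_T (j : Fin N) : c N j = (I ^ (-(j : ℤ))) • T N (CF N j) := by
  rw [c, string_eq_T, site_eq_T, T_mul]
  refine congrArg _ (congrArg (T N) (funext fun k => ?_))
  rcases lt_trichotomy k j with h | h | h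
  · simp [CF, h, h.ne, mDM]
  · simp [CF, h, lt_irrefl]
  · have h3 : ¬ k < j := not_lt_of_gt h
    simp [CF, h3, h.ne']

lemma cd_eq_T (j : Fin N) : cd N j = (I ^ ((j : ℕ))) • T N (CdF N j) := by
  rw [cd, string_eq_T, site_eq_T, T_mul]
  refine congrArg _ (congrArg (T N) (funext fun k => ?_))
  rcases lt_trichotomy k j with h | h | h
  · simp [CdF, h, h.ne, mDP]
  · simp [CdF, h, lt_irrefl]
  · have h3 : ¬ k < j := not_lt_of_gt h
    simp [CdF, h3, h.ne']


lemma car (j k : Fin N) :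
    c N j * cd N k + cd N k * c N j = (if j = k then (1 : ℂ) else 0) • (1 : Op N) := by
  rw [c_eq_T, cd_eq_T, smul_mul_smul_comm, smul_mul_smul_comm, T_mul, T_mul,
    mul_comm ((I : ℂ) ^ ((k : ℕ))) (I ^ (-(j : ℤ))), ← smul_add]
  rcases lt_trichotomy j k with h | h | h
  · rw [if_neg h.ne]
    have hcomm : ∀ m, m ≠ j → CF N j m * CdF N k m = CdF N k m * CF N j m := by
      intro m hm
      rcases lt_trichotomy m j with h1 | h1 | h1
      · have h2 : m < k := h1.trans h
        simp [CF, CdF, h1, h2, mDM_mul_mDP, mDP_mul_mDM]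
      · exact absurd h1 hm
      · have h3 : ¬ m < j := not_lt_of_gt h1
        simp [CF, CdF, h3, h1.ne', hm]
    rw [T_add_slot N _ _ j hcomm, T_eq_zero N _ j, smul_zero, zero_smul]
    have hj : CF N j j = sigmaMinus := by simp [CF]
    have hk : CdF N k j = mDP := by simp [CdF, h]
    simp only [if_pos rfl, hj, hk, sm_mDP_anticomm]
    simp
  · subst h
    rw [if_pos rfl, one_smul]
    have hcomm : ∀ m, m ≠ j → CF N j m * CdF N j m = CdF N j m * CF N j m := by
      intro m hm
      rcases lt_trichotomy m j with h1 | h1 | h1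
      · simp [CF, CdF, h1, mDM_mul_mDP, mDP_mul_mDM]
      · exact absurd h1 hm
      · have h3 : ¬ m < j := not_lt_of_gt h1
        simp [CF, CdF, h3, h1.ne', hm]
    rw [T_add_slot N _ _ j hcomm]
    have hs : (I : ℂ) ^ (-(j : ℤ)) * I ^ ((j : ℕ)) = 1 := by
      rw [← zpow_natCast (I : ℂ) (j : ℕ), ← zpow_add₀ Complex.I_ne_zero]
      simp
    rw [hs]
    have : (fun m => if m = j then CF N j j * CdF N j j + CdF N j j * CF N j j
        else CF N j m * CdF N j m) = fun _ => (1 : Matrix (Fin 2) (Fin 2) ℂ) := by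
      funext m
      rcases lt_trichotomy m j with h1 | h1 | h1
      · simp [CF, CdF, h1, h1.ne, mDM_mul_mDP]
      · simp [CF, CdF, h1, sm_sp_anticomm]
      · have h3 : ¬ m < j := not_lt_of_gt h1
        simp [CF, CdF, h3, h1.ne', h1.ne']
    rw [this, T_one, one_smul]
  · rw [if_neg h.ne']
    have hcomm : ∀ m, m ≠ k → CF N j m * CdF N k m = CdF N k m * CF N j m := by
      intro m hm
      rcases lt_trichotomy m k with h1 | h1 | h1
      · have h2 : m < j := h1.trans h
        simp [CF, CdF, h1, h2, mDM_mul_mDP, mDP_mul_mDM]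
      · exact absurd h1 hm
      · have h3 : ¬ m < k := not_lt_of_gt h1
        simp [CF, CdF, h3, h1.ne', hm]
    rw [T_add_slot N _ _ k hcomm, T_eq_zero N _ k, smul_zero, zero_smul]
    have hj : CF N j k = mDM := by simp [CF, h]
    have hk : CdF N k k = sigmaPlus := by simp [CdF]
    simp only [if_pos rfl, hj, hk]
    rw [show mDM * sigmaPlus + sigmaPlus * mDM = 0 by
      rw [add_comm]; exact sp_mDM_anticomm]
    simp


/-- quadratic form `Σ B j k • cd_j c_k` -/
def Dq (B : Fin N → Fin N → ℂ) : Op N := ∑ j : Fin N, ∑ k : Fin N, B j k • (cd N j * c N k)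

lemma Dq_single (b a : Fin N) :
    cd N b * c N a = Dq N fun j k => if j = b ∧ k = a then 1 else 0 := by
  simp [Dq, ite_and, ite_smul, Finset.sum_ite_eq, Finset.sum_ite_eq']

lemma prod_c_cd (a b : Fin N) :
    c N a * cd N b
      = (if a = b then (1 : ℂ) else 0) • (1 : Op N)
        - Dq N fun j k => if j = b ∧ k = a then 1 else 0 := by
  rw [← Dq_single, eq_sub_iff_add_eq, car]

lemma Dq_add (B B' : Fin N → Fin N → ℂ) :
    Dq N B + Dq N B' = Dq N fun j k => B j k + B' j k := by
  simp [Dq, Finset.sum_add_distrib, add_smul]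

lemma Dq_smul (a : ℂ) (B : Fin N → Fin N → ℂ) :
    a • Dq N B = Dq N fun j k => a * B j k := by
  simp [Dq, Finset.smul_sum, smul_smul]

lemma Dq_neg (B : Fin N → Fin N → ℂ) : -Dq N B = Dq N fun j k => -B j k := by
  simp [Dq, ← Finset.sum_neg_distrib, neg_smul]

lemma Dq_sum {ι : Type*} (s : Finset ι) (B : ι → Fin N → Fin N → ℂ) :
    ∑ i ∈ s, Dq N (B i) = Dq N fun j k => ∑ i ∈ s, B i j k := by
  unfold Dq
  rw [Finset.sum_comm]
  refine Finset.sum_congr rfl fun j _ => ?_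
  rw [Finset.sum_comm]
  exact Finset.sum_congr rfl fun k _ => (Finset.sum_smul).symm

/-- the phase `i^{j+k+2}` -/
def phs (j k : Fin N) : ℂ := I ^ ((j : ℕ) + (k : ℕ) + 2)

lemma f_mul_fd (a b : Fin N) :
    f N a * fd N b = phs N a b • (c N a * cd N b) := by
  rw [f, fd, smul_mul_smul_comm, ← pow_add, phs]
  ring_nf

lemma fsucc_val {j : Fin N} : (fsucc j : ℕ) = ((j : ℕ) + 1) % N := rfl

lemma fsucc_ne (hN2 : 2 ≤ N) (j : Fin N) : fsucc j ≠ j := by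
  intro h
  have hv : ((j : ℕ) + 1) % N = (j : ℕ) := congrArg Fin.val h
  have hlt := j.isLt
  by_cases h1 : (j : ℕ) + 1 = N
  · rw [h1, Nat.mod_self] at hv; omega
  · rw [Nat.mod_eq_of_lt (by omega)] at hv; omega

lemma phs_parity (hN : Even N) (m : Fin N) :
    phs N m m + phs N (fsucc m) (fsucc m) = 0 := by
  simp only [phs, fsucc_val]
  obtain ⟨L, hL⟩ := hN
  have h2 : ∀ a : ℕ, (I : ℂ) ^ (a + a + 2) = (-1) ^ (a + 1) := by
    intro a
    have : a + a + 2 = 2 * (a + 1) := by ring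
    rw [this, pow_mul, Complex.I_sq]
  rw [h2, h2]
  have hpar : ((m : ℕ) + 1) % N % 2 = ((m : ℕ) + 1) % 2 :=
    Nat.mod_mod_of_dvd _ (by omega)
  have hs : ((-1 : ℂ)) ^ (((m : ℕ) + 1) % N + 1) = -((-1 : ℂ)) ^ ((m : ℕ) + 1) := by
    rcases Nat.even_or_odd ((m : ℕ) + 1) with he | ho
    · have h1 : Even (((m : ℕ) + 1) % N) := by
        rw [Nat.even_iff, hpar, ← Nat.even_iff]; exact he
      rw [pow_succ, h1.neg_one_pow, he.neg_one_pow]; ring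
    · have h1 : Odd (((m : ℕ) + 1) % N) := by
        rw [Nat.odd_iff, hpar, ← Nat.odd_iff]; exact ho
      rw [pow_succ, h1.neg_one_pow, ho.neg_one_pow]; ring
  rw [hs]
  ring


lemma fsucc_eq_add_one {N : ℕ} [NeZero N] (j : Fin N) : fsucc j = j + 1 := by
  apply Fin.ext
  rw [Fin.add_def, Fin.val_one' N]
  exact (Nat.ModEq.add_left (j : ℕ) (Nat.mod_modEq 1 N)).symm

def BL (j k : Fin N) : ℂ :=
  (if j = k then 2 * phs N j k else 0)
  + (if j = fsucc k then phs N j k else 0)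
  + (if k = fsucc j then phs N j k else 0)

lemma neg_e_eq (hN : Even N) (hN2 : 2 ≤ N) (m : Fin N) :
    - e N m = Dq N fun j k =>
      (if j = m ∧ k = m then phs N j k else 0)
      + (if j = fsucc m ∧ k = m then phs N j k else 0)
      + (if j = m ∧ k = fsucc m then phs N j k else 0)
      + (if j = fsucc m ∧ k = fsucc m then phs N j k else 0) := by
  have hcoef : ∀ (a b : Fin N), (fun j k => phs N a b * (if j = b ∧ k = a then (1:ℂ) else 0))
      = fun j k => if j = b ∧ k = a then phs N j k else 0 := by
    intro a b
    funext j k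
    by_cases h : j = b ∧ k = a
    · obtain ⟨h1, h2⟩ := h
      subst h1; subst h2
      simp [phs]
      ring
    · simp [h]
  have step1 : e N m
      = phs N m m • (c N m * cd N m) + phs N m (fsucc m) • (c N m * cd N (fsucc m))
        + phs N (fsucc m) m • (c N (fsucc m) * cd N m)
        + phs N (fsucc m) (fsucc m) • (c N (fsucc m) * cd N (fsucc m)) := by
    rw [e, add_mul, mul_add, mul_add, f_mul_fd, f_mul_fd, f_mul_fd, f_mul_fd]
    abel
  rw [step1, prod_c_cd, prod_c_cd, prod_c_cd, prod_c_cd,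
    if_pos rfl, if_pos rfl, if_neg (Ne.symm (fsucc_ne N hN2 m)), if_neg (fsucc_ne N hN2 m)]
  have hone : phs N m m • (1 : Op N) + phs N (fsucc m) (fsucc m) • (1 : Op N) = 0 := by
    rw [← add_smul, phs_parity N hN m, zero_smul]
  have expand : -(phs N m m • ((1:ℂ) • (1:Op N) - Dq N fun j k => if j = m ∧ k = m then (1:ℂ) else 0)
      + phs N m (fsucc m) • ((0:ℂ) • (1:Op N) - Dq N fun j k => if j = fsucc m ∧ k = m then (1:ℂ) else 0)
      + phs N (fsucc m) m • ((0:ℂ) • (1:Op N) - Dq N fun j k => if j = m ∧ k = fsucc m then (1:ℂ) else 0)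
      + phs N (fsucc m) (fsucc m) • ((1:ℂ) • (1:Op N) - Dq N fun j k => if j = fsucc m ∧ k = fsucc m then (1:ℂ) else 0))
      = -(phs N m m • (1 : Op N) + phs N (fsucc m) (fsucc m) • (1 : Op N))
        + (phs N m m • Dq N (fun j k => if j = m ∧ k = m then (1:ℂ) else 0)
          + phs N m (fsucc m) • Dq N (fun j k => if j = fsucc m ∧ k = m then (1:ℂ) else 0)
          + phs N (fsucc m) m • Dq N (fun j k => if j = m ∧ k = fsucc m then (1:ℂ) else 0)
          + phs N (fsucc m) (fsucc m) • Dq N (fun j k => if j = fsucc m ∧ k = fsucc m then (1:ℂ) else 0)) := by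
    simp only [zero_smul, one_smul, smul_sub, smul_zero]
    abel
  rw [expand, hone, neg_zero, zero_add, Dq_smul, Dq_smul, Dq_smul, Dq_smul,
    hcoef m m, hcoef m (fsucc m), hcoef (fsucc m) m, hcoef (fsucc m) (fsucc m),
    Dq_add, Dq_add, Dq_add]

lemma lhs_eq (hN : Even N) (hN2 : 2 ≤ N) :
    -(∑ m : Fin N, e N m) = Dq N (BL N) := by
  haveI : NeZero N := ⟨by omega⟩
  rw [← Finset.sum_neg_distrib]
  rw [Finset.sum_congr rfl fun m _ => neg_e_eq N hN hN2 m, Dq_sum]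
  refine congrArg (Dq N) (funext fun j => funext fun k => ?_)
  simp only [Finset.sum_add_distrib]
  have t1 : ∑ m : Fin N, (if j = m ∧ k = m then phs N j k else 0)
      = if j = k then phs N j k else 0 := by
    rw [Finset.sum_eq_single j]
    · by_cases h : j = k
      · subst h; simp
      · rw [if_neg (fun hh => h (hh.2.symm : j = k)), if_neg h]
    · intro m _ hm
      rw [if_neg]
      rintro ⟨h1, -⟩; exact hm h1.symm
    · simp
  have t2 : ∑ m : Fin N, (if j = fsucc m ∧ k = m then phs N j k else 0)
      = if j = fsucc k then phs N j k else 0 := by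
    rw [Finset.sum_eq_single k]
    · by_cases h : j = fsucc k <;> simp [h]
    · intro m _ hm
      rw [if_neg]
      rintro ⟨-, h2⟩; exact hm h2.symm
    · simp
  have t3 : ∑ m : Fin N, (if j = m ∧ k = fsucc m then phs N j k else 0)
      = if k = fsucc j then phs N j k else 0 := by
    rw [Finset.sum_eq_single j]
    · by_cases h : k = fsucc j <;> simp [h]
    · intro m _ hm
      rw [if_neg]
      rintro ⟨h1, -⟩; exact hm h1.symm
    · simp
  have t4 : ∑ m : Fin N, (if j = fsucc m ∧ k = fsucc m then phs N j k else 0)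
      = if j = k then phs N j k else 0 := by
    rw [Finset.sum_eq_single (j - 1)]
    · have hs : fsucc (j - 1) = j := by rw [fsucc_eq_add_one, sub_add_cancel]
      rw [hs]
      by_cases h : j = k
      · subst h; simp
      · rw [if_neg (fun hh => h (hh.2.symm : j = k)), if_neg h]
    · intro m _ hm
      rw [if_neg]
      rintro ⟨h1, -⟩
      rw [fsucc_eq_add_one] at h1
      exact hm (by rw [h1, add_sub_cancel_right])
    · simp
  rw [t1, t2, t3, t4, BL]
  by_cases h : j = k
  · simp only [if_pos h]; ring
  · simp only [if_neg h]; ring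


lemma thetad_mul_theta (q q' : ℝ) :
    thetad N q * theta N q' = Dq N fun j k =>
      ((N : ℂ))⁻¹ * (Complex.exp (I * ((j : ℕ) + 1) * (q : ℂ))
        * Complex.exp (-(I * ((k : ℕ) + 1) * (q' : ℂ)))) := by
  rw [thetad, theta, smul_mul_smul_comm, Finset.sum_mul_sum]
  have hs : ((Real.sqrt N : ℂ))⁻¹ * ((Real.sqrt N : ℂ))⁻¹ = ((N : ℂ))⁻¹ := by
    rw [← mul_inv, ← Complex.ofReal_mul, Real.mul_self_sqrt (Nat.cast_nonneg N)]
    norm_num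
  rw [hs, Dq, Finset.smul_sum]
  refine Finset.sum_congr rfl fun j _ => ?_
  rw [Finset.smul_sum]
  refine Finset.sum_congr rfl fun k _ => ?_
  rw [smul_mul_smul_comm, smul_smul]

/-- generic quadratic expansion -/
lemma quad_expand (r t u : ℂ) (A B Cc D : Op N) :
    (r • (t • A + u • B)) * (r • (u • Cc + t • D))
      - (r • (t • A - u • B)) * (r • (u • Cc - t • D))
    = (2 * (r * r) * (t * t)) • (A * D) + (2 * (r * r) * (u * u)) • (B * Cc) := by
  simp only [smul_add, smul_sub, add_mul, mul_add, sub_mul, mul_sub,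
    smul_mul_smul_comm, smul_smul]
  module

lemma chid_chi_sub (p : ℝ) (h1 : 0 ≤ Real.tan (p/2)) (h2 : 0 ≤ Real.cot (p/2)) :
    chid N p * chi N p - etad N p * eta N p
      = ((Real.tan (p/2) : ℝ) : ℂ) • (thetad N (p - Real.pi/2) * theta N (p + Real.pi/2))
        + ((Real.cot (p/2) : ℝ) : ℂ) • (thetad N (p + Real.pi/2) * theta N (p - Real.pi/2)) := by
  rw [chid, chi, etad, eta, quad_expand]
  have hr : ((Real.sqrt 2 : ℂ))⁻¹ * ((Real.sqrt 2 : ℂ))⁻¹ = (2 : ℂ)⁻¹ := by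
    rw [← mul_inv, ← Complex.ofReal_mul, Real.mul_self_sqrt (by norm_num)]
    norm_num
  have ht : ((Real.sqrt (Real.tan (p/2)) : ℝ) : ℂ) * ((Real.sqrt (Real.tan (p/2)) : ℝ) : ℂ)
      = ((Real.tan (p/2) : ℝ) : ℂ) := by
    rw [← Complex.ofReal_mul, Real.mul_self_sqrt h1]
  have hu : ((Real.sqrt (Real.cot (p/2)) : ℝ) : ℂ) * ((Real.sqrt (Real.cot (p/2)) : ℝ) : ℂ)
      = ((Real.cot (p/2) : ℝ) : ℂ) := by
    rw [← Complex.ofReal_mul, Real.mul_self_sqrt h2]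
  rw [hr, ht, hu]
  norm_num


lemma geo (L : ℕ) (hL : 0 < L) (t : ℤ) (ht : Even t) :
    ∑ n ∈ Finset.Ico 1 L, (Complex.exp (I * (t : ℂ) * (Real.pi : ℂ) / (L : ℂ))) ^ n
      = if (2 * (L : ℤ)) ∣ t then ((L : ℂ) - 1) else -1 := by
  have hLC : ((L : ℂ)) ≠ 0 := Nat.cast_ne_zero.mpr hL.ne'
  by_cases hdvd : (2 * (L : ℤ)) ∣ t
  · obtain ⟨u, hu⟩ := hdvd
    have harg : I * (t : ℂ) * (Real.pi : ℂ) / (L : ℂ) = (u : ℂ) * (2 * (Real.pi : ℂ) * I) := by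
      rw [hu]; push_cast; field_simp
    rw [if_pos ⟨u, hu⟩, harg, Complex.exp_int_mul_two_pi_mul_I]
    simp only [one_pow, Finset.sum_const, Nat.card_Ico, nsmul_eq_mul, mul_one]
    rw [Nat.cast_sub hL]
    norm_num
  · rw [if_neg hdvd]
    set r := Complex.exp (I * (t : ℂ) * (Real.pi : ℂ) / (L : ℂ)) with hr
    have hr1 : r ≠ 1 := by
      intro h
      obtain ⟨m, hm⟩ := Complex.exp_eq_one_iff.mp h
      apply hdvd
      have hm2 : (Real.pi : ℂ) * I * (t : ℂ) = (Real.pi : ℂ) * I * (2 * (m : ℂ) * (L : ℂ)) := by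
        field_simp at hm
        linear_combination ((Real.pi : ℂ) * I) * hm
      have hm3 : (t : ℂ) = 2 * (m : ℂ) * (L : ℂ) :=
        mul_left_cancel₀ (mul_ne_zero (Complex.ofReal_ne_zero.mpr Real.pi_ne_zero)
          Complex.I_ne_zero) hm2
      have hm4 : t = 2 * m * L := by exact_mod_cast hm3
      exact ⟨m, by rw [hm4]; ring⟩
    have hrL : r ^ L = 1 := by
      rw [hr, ← Complex.exp_nat_mul]
      obtain ⟨s, hs⟩ := ht
      have : (L : ℂ) * (I * (t : ℂ) * (Real.pi : ℂ) / (L : ℂ)) = (s : ℂ) * (2 * (Real.pi : ℂ) * I) := by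
        rw [hs]; push_cast; field_simp; ring
      rw [this, Complex.exp_int_mul_two_pi_mul_I]
    have hgeom : ∑ n ∈ Finset.range L, r ^ n = 0 := by
      rw [geom_sum_eq hr1, hrL]
      simp
    rw [Finset.sum_Ico_eq_sub (fun n => r ^ n) hL, hgeom]
    simp


set_option maxHeartbeats 1600000 in
lemma crux (L : ℕ) (hL : 0 < L) (j k : Fin (2 * L)) :
    BL (2 * L) j k =
    2 *
        ∑ n ∈ Finset.Ico 1 L,
          ((Real.sin ((n : ℝ) * Real.pi / (L : ℝ)) : ℝ) : ℂ) *
            (((Real.tan ((n : ℝ) * Real.pi / (L : ℝ) / 2) : ℝ) : ℂ) *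
                (((2 * L : ℕ) : ℂ)⁻¹ *
                  (Complex.exp (Complex.I * (((j : ℕ) : ℂ) + 1) * (((n : ℝ) * Real.pi / (L : ℝ) - Real.pi / 2 : ℝ) : ℂ)) *
                    Complex.exp (-(Complex.I * (((k : ℕ) : ℂ) + 1) * (((n : ℝ) * Real.pi / (L : ℝ) + Real.pi / 2 : ℝ) : ℂ))))) +
              ((Real.cot ((n : ℝ) * Real.pi / (L : ℝ) / 2) : ℝ) : ℂ) *
                (((2 * L : ℕ) : ℂ)⁻¹ *
                  (Complex.exp (Complex.I * (((j : ℕ) : ℂ) + 1) * (((n : ℝ) * Real.pi / (L : ℝ) + Real.pi / 2 : ℝ) : ℂ)) *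
                    Complex.exp (-(Complex.I * (((k : ℕ) : ℂ) + 1) * (((n : ℝ) * Real.pi / (L : ℝ) - Real.pi / 2 : ℝ) : ℂ)))))) +
      4 *
        (((2 * L : ℕ) : ℂ)⁻¹ *
          (Complex.exp (Complex.I * (((j : ℕ) : ℂ) + 1) * ((Real.pi / 2 : ℝ) : ℂ)) *
            Complex.exp (-(Complex.I * (((k : ℕ) : ℂ) + 1) * ((3 * Real.pi / 2 : ℝ) : ℂ))))) := by
  have hN2 : 2 ≤ 2 * L := by omega
  have hLC : ((L : ℂ)) ≠ 0 := Nat.cast_ne_zero.mpr hL.ne'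
  have hLR : ((L : ℝ)) ≠ 0 := Nat.cast_ne_zero.mpr hL.ne'
  set a := (j : ℕ) with ha
  set b := (k : ℕ) with hb
  set S := a + b + 2 with hS
  set D : ℤ := (a : ℤ) - (b : ℤ) with hD
  set ω := (I : ℂ) ^ S with hω
  set inv := ((2 * L : ℕ) : ℂ)⁻¹ with hinv
  have haL : a < 2 * L := j.isLt
  have hbL : b < 2 * L := k.isLt
  have hωne : ω ≠ 0 := pow_ne_zero _ Complex.I_ne_zero
  have h2L : ((2 * L : ℕ) : ℂ) ≠ 0 := Nat.cast_ne_zero.mpr (by omega)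
  -- phase facts
  have hIpi2 : Complex.exp ((Real.pi : ℂ) / 2 * I) = I := by
    have h1 : ((Real.pi : ℂ) / 2) = ((Real.pi / 2 : ℝ) : ℂ) := by push_cast; ring
    rw [h1, Complex.exp_mul_I, ← Complex.ofReal_cos, ← Complex.ofReal_sin,
      Real.cos_pi_div_two, Real.sin_pi_div_two]
    simp
  have hW : Complex.exp ((S : ℂ) * ((Real.pi : ℂ) / 2 * I)) = ω := by
    rw [Complex.exp_nat_mul, hIpi2]
  have hWneg : Complex.exp (-((S : ℂ) * ((Real.pi : ℂ) / 2 * I))) = ω⁻¹ := by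
    rw [Complex.exp_neg, hW]
  have hsq : ω * ω = ((-1 : ℂ)) ^ S := by
    rw [hω, ← pow_add, ← two_mul, pow_mul, Complex.I_sq]
  -- exp-product identities
  have hE1 : ∀ n : ℕ,
      Complex.exp (Complex.I * ((a : ℂ) + 1) * (((n : ℝ) * Real.pi / (L : ℝ) - Real.pi / 2 : ℝ) : ℂ)) *
        Complex.exp (-(Complex.I * ((b : ℂ) + 1) * (((n : ℝ) * Real.pi / (L : ℝ) + Real.pi / 2 : ℝ) : ℂ)))
      = ω⁻¹ * (Complex.exp (I * (D : ℂ) * (Real.pi : ℂ) / (L : ℂ))) ^ n := by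
    intro n
    rw [← hWneg, ← Complex.exp_nat_mul, ← Complex.exp_add, ← Complex.exp_add]
    congr 1
    rw [hD, hS]
    push_cast
    field_simp
    ring
  have hE2 : ∀ n : ℕ,
      Complex.exp (Complex.I * ((a : ℂ) + 1) * (((n : ℝ) * Real.pi / (L : ℝ) + Real.pi / 2 : ℝ) : ℂ)) *
        Complex.exp (-(Complex.I * ((b : ℂ) + 1) * (((n : ℝ) * Real.pi / (L : ℝ) - Real.pi / 2 : ℝ) : ℂ)))
      = ω * (Complex.exp (I * (D : ℂ) * (Real.pi : ℂ) / (L : ℂ))) ^ n := by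
    intro n
    rw [← hW, ← Complex.exp_nat_mul, ← Complex.exp_add, ← Complex.exp_add]
    congr 1
    rw [hD, hS]
    push_cast
    field_simp
    ring
  have hconst : Complex.exp (Complex.I * ((a : ℂ) + 1) * ((Real.pi / 2 : ℝ) : ℂ)) *
      Complex.exp (-(Complex.I * ((b : ℂ) + 1) * ((3 * Real.pi / 2 : ℝ) : ℂ))) = ω := by
    rw [← Complex.exp_add]
    have harg : Complex.I * ((a : ℂ) + 1) * ((Real.pi / 2 : ℝ) : ℂ) +
        -(Complex.I * ((b : ℂ) + 1) * ((3 * Real.pi / 2 : ℝ) : ℂ))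
        = (S : ℂ) * ((Real.pi : ℂ) / 2 * I) + ((-(b : ℤ) - 1 : ℤ) : ℂ) * (2 * (Real.pi : ℂ) * I) := by
      rw [hS]
      push_cast
      ring
    rw [harg, Complex.exp_add, Complex.exp_int_mul_two_pi_mul_I, mul_one, hW]
  -- trig identities
  have htrig : ∀ n ∈ Finset.Ico 1 L,
      ((Real.sin ((n : ℝ) * Real.pi / (L : ℝ)) : ℝ) : ℂ) * ((Real.tan ((n : ℝ) * Real.pi / (L : ℝ) / 2) : ℝ) : ℂ)
          = 1 - ((Real.cos ((n : ℝ) * Real.pi / (L : ℝ)) : ℝ) : ℂ)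
        ∧ ((Real.sin ((n : ℝ) * Real.pi / (L : ℝ)) : ℝ) : ℂ) * ((Real.cot ((n : ℝ) * Real.pi / (L : ℝ) / 2) : ℝ) : ℂ)
          = 1 + ((Real.cos ((n : ℝ) * Real.pi / (L : ℝ)) : ℝ) : ℂ) := by
    intro n hn
    obtain ⟨hn1, hn2⟩ := Finset.mem_Ico.mp hn
    set x := (n : ℝ) * Real.pi / (L : ℝ) / 2 with hx
    have hx0 : 0 < x := by
      apply div_pos (div_pos (mul_pos (by exact_mod_cast hn1) Real.pi_pos) (by positivity)) (by norm_num)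
    have hx2 : x < Real.pi / 2 := by
      rw [hx]
      have h1 : (n : ℝ) * Real.pi / (L : ℝ) < Real.pi := by
        rw [div_lt_iff₀ (by positivity)]
        have h2 : (n : ℝ) < (L : ℝ) := by exact_mod_cast hn2
        nlinarith [Real.pi_pos]
      linarith
    have hcx : 0 < Real.cos x := Real.cos_pos_of_mem_Ioo ⟨by linarith [Real.pi_pos], hx2⟩
    have hsx : 0 < Real.sin x := Real.sin_pos_of_pos_of_lt_pi hx0 (by linarith [Real.pi_pos])
    have h2x : (n : ℝ) * Real.pi / (L : ℝ) = 2 * x := by rw [hx]; ring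
    have hr1 : Real.sin ((n : ℝ) * Real.pi / (L : ℝ)) * Real.tan x
        = 1 - Real.cos ((n : ℝ) * Real.pi / (L : ℝ)) := by
      rw [h2x, Real.sin_two_mul, Real.tan_eq_sin_div_cos, Real.cos_two_mul']
      field_simp
      nlinarith [Real.sin_sq_add_cos_sq x]
    have hr2 : Real.sin ((n : ℝ) * Real.pi / (L : ℝ)) * Real.cot x
        = 1 + Real.cos ((n : ℝ) * Real.pi / (L : ℝ)) := by
      rw [h2x, Real.sin_two_mul, Real.cot_eq_cos_div_sin, Real.cos_two_mul']
      field_simp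
      nlinarith [Real.sin_sq_add_cos_sq x]
    constructor
    · rw [← Complex.ofReal_mul, hr1]; push_cast; ring
    · rw [← Complex.ofReal_mul, hr2]; push_cast; ring
  have hphs : phs (2 * L) j k = ω := rfl
  rcases Nat.even_or_odd (a + b) with hpar | hpar
  · -- a + b even
    obtain ⟨u, hu⟩ := hpar
    have hSeven : Even S := ⟨u + 1, by rw [hS]; omega⟩
    have hωinv : ω⁻¹ = ω := inv_eq_of_mul_eq_one_right (by rw [hsq, hSeven.neg_one_pow])
    have hDeven : Even D := ⟨(a : ℤ) - u, by rw [hD]; omega⟩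
    have hsum : ∀ n ∈ Finset.Ico 1 L,
        ((Real.sin ((n : ℝ) * Real.pi / (L : ℝ)) : ℝ) : ℂ) *
            (((Real.tan ((n : ℝ) * Real.pi / (L : ℝ) / 2) : ℝ) : ℂ) *
                (inv *
                  (Complex.exp (Complex.I * ((a : ℂ) + 1) * (((n : ℝ) * Real.pi / (L : ℝ) - Real.pi / 2 : ℝ) : ℂ)) *
                    Complex.exp (-(Complex.I * ((b : ℂ) + 1) * (((n : ℝ) * Real.pi / (L : ℝ) + Real.pi / 2 : ℝ) : ℂ))))) +
              ((Real.cot ((n : ℝ) * Real.pi / (L : ℝ) / 2) : ℝ) : ℂ) *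
                (inv *
                  (Complex.exp (Complex.I * ((a : ℂ) + 1) * (((n : ℝ) * Real.pi / (L : ℝ) + Real.pi / 2 : ℝ) : ℂ)) *
                    Complex.exp (-(Complex.I * ((b : ℂ) + 1) * (((n : ℝ) * Real.pi / (L : ℝ) - Real.pi / 2 : ℝ) : ℂ))))))
          = inv * (2 * ω) * (Complex.exp (I * (D : ℂ) * (Real.pi : ℂ) / (L : ℂ))) ^ n := by
      intro n hn
      obtain ⟨c1, c2⟩ := htrig n hn
      rw [hE1 n, hE2 n, hωinv]
      linear_combination (inv * ω * (Complex.exp (I * (D : ℂ) * (Real.pi : ℂ) / (L : ℂ))) ^ n) * c1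
        + (inv * ω * (Complex.exp (I * (D : ℂ) * (Real.pi : ℂ) / (L : ℂ))) ^ n) * c2
    rw [Finset.sum_congr rfl hsum, ← Finset.mul_sum, geo L hL D hDeven, hconst]
    by_cases hjk : j = k
    · have hab : a = b := congrArg Fin.val hjk
      have hD0 : D = 0 := by rw [hD, hab]; ring
      rw [if_pos (hD0 ▸ dvd_zero (2 * (L : ℤ)))]
      unfold BL
      rw [if_pos hjk, if_neg (by rw [hjk]; exact (fsucc_ne _ hN2 k).symm),
        if_neg (by rw [hjk]; exact (fsucc_ne _ hN2 k).symm), hphs]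
      rw [hinv, show ((2 * L : ℕ) : ℂ) = 2 * (L : ℂ) by push_cast; ring]
      field_simp
      ring
    · have hab : a ≠ b := fun h => hjk (Fin.ext h)
      have hDne : D ≠ 0 := by rw [hD]; intro h; apply hab; omega
      have hnd : ¬ (2 * (L : ℤ)) ∣ D := by
        intro h
        refine hDne (Int.eq_zero_of_abs_lt_dvd h ?_)
        rw [abs_lt, hD]
        omega
      rw [if_neg hnd]
      unfold BL
      have hm1 : j ≠ fsucc k := by
        intro h
        have hv : a = (b + 1) % (2 * L) := congrArg Fin.val h
        have hmm : (b + 1) % (2 * L) % 2 = (b + 1) % 2 := Nat.mod_mod_of_dvd _ ⟨L, rfl⟩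
        generalize hX : (b + 1) % (2 * L) = X at hv hmm
        omega
      have hm2 : k ≠ fsucc j := by
        intro h
        have hv : b = (a + 1) % (2 * L) := congrArg Fin.val h
        have hmm : (a + 1) % (2 * L) % 2 = (a + 1) % 2 := Nat.mod_mod_of_dvd _ ⟨L, rfl⟩
        generalize hX : (a + 1) % (2 * L) = X at hv hmm
        omega
      rw [if_neg hjk, if_neg hm1, if_neg hm2]
      ring
  · -- a + b odd
    obtain ⟨u, hu⟩ := hpar
    have hSodd : Odd S := ⟨u + 1, by rw [hS]; omega⟩
    have hωinv : ω⁻¹ = -ω :=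
      inv_eq_of_mul_eq_one_right (by rw [mul_neg, hsq, hSodd.neg_one_pow]; ring)
    have hDp1 : Even (D + 1) := ⟨(a : ℤ) - u, by rw [hD]; omega⟩
    have hDm1 : Even (D - 1) := ⟨(a : ℤ) - u - 1, by rw [hD]; omega⟩
    have hP : ∀ n : ℕ,
        (Complex.exp (I * ((D + 1 : ℤ) : ℂ) * (Real.pi : ℂ) / (L : ℂ))) ^ n
          = (Complex.exp (I * (D : ℂ) * (Real.pi : ℂ) / (L : ℂ))) ^ n
            * Complex.exp ((((n : ℝ) * Real.pi / (L : ℝ) : ℝ) : ℂ) * I) := by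
      intro n
      rw [← Complex.exp_nat_mul, ← Complex.exp_nat_mul, ← Complex.exp_add]
      congr 1
      push_cast
      field_simp
    have hM : ∀ n : ℕ,
        (Complex.exp (I * ((D - 1 : ℤ) : ℂ) * (Real.pi : ℂ) / (L : ℂ))) ^ n
          = (Complex.exp (I * (D : ℂ) * (Real.pi : ℂ) / (L : ℂ))) ^ n
            * Complex.exp (-(((n : ℝ) * Real.pi / (L : ℝ) : ℝ) : ℂ) * I) := by
      intro n
      rw [← Complex.exp_nat_mul, ← Complex.exp_nat_mul, ← Complex.exp_add]
      congr 1
      push_cast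
      field_simp
      ring
    have hcos : ∀ n : ℕ, 2 * ((Real.cos ((n : ℝ) * Real.pi / (L : ℝ)) : ℝ) : ℂ)
        = Complex.exp ((((n : ℝ) * Real.pi / (L : ℝ) : ℝ) : ℂ) * I)
          + Complex.exp (-(((n : ℝ) * Real.pi / (L : ℝ) : ℝ) : ℂ) * I) := by
      intro n
      rw [Complex.ofReal_cos]
      exact Complex.two_cos _
    have hsum : ∀ n ∈ Finset.Ico 1 L,
        ((Real.sin ((n : ℝ) * Real.pi / (L : ℝ)) : ℝ) : ℂ) *
            (((Real.tan ((n : ℝ) * Real.pi / (L : ℝ) / 2) : ℝ) : ℂ) *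
                (inv *
                  (Complex.exp (Complex.I * ((a : ℂ) + 1) * (((n : ℝ) * Real.pi / (L : ℝ) - Real.pi / 2 : ℝ) : ℂ)) *
                    Complex.exp (-(Complex.I * ((b : ℂ) + 1) * (((n : ℝ) * Real.pi / (L : ℝ) + Real.pi / 2 : ℝ) : ℂ))))) +
              ((Real.cot ((n : ℝ) * Real.pi / (L : ℝ) / 2) : ℝ) : ℂ) *
                (inv *
                  (Complex.exp (Complex.I * ((a : ℂ) + 1) * (((n : ℝ) * Real.pi / (L : ℝ) + Real.pi / 2 : ℝ) : ℂ)) *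
                    Complex.exp (-(Complex.I * ((b : ℂ) + 1) * (((n : ℝ) * Real.pi / (L : ℝ) - Real.pi / 2 : ℝ) : ℂ))))))
          = inv * ω * ((Complex.exp (I * ((D + 1 : ℤ) : ℂ) * (Real.pi : ℂ) / (L : ℂ))) ^ n
              + (Complex.exp (I * ((D - 1 : ℤ) : ℂ) * (Real.pi : ℂ) / (L : ℂ))) ^ n) := by
      intro n hn
      obtain ⟨c1, c2⟩ := htrig n hn
      rw [hE1 n, hE2 n, hωinv, hP n, hM n]
      linear_combination (-(inv * ω * (Complex.exp (I * (D : ℂ) * (Real.pi : ℂ) / (L : ℂ))) ^ n)) * c1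
        + (inv * ω * (Complex.exp (I * (D : ℂ) * (Real.pi : ℂ) / (L : ℂ))) ^ n) * c2
        + (inv * ω * (Complex.exp (I * (D : ℂ) * (Real.pi : ℂ) / (L : ℂ))) ^ n) * (hcos n)
    rw [Finset.sum_congr rfl hsum, ← Finset.mul_sum, Finset.sum_add_distrib,
      geo L hL (D + 1) hDp1, geo L hL (D - 1) hDm1, hconst]
    have hmod : ∀ (x y : ℕ), x < 2 * L → ((x = y % (2 * L)) ↔ (((2 * L : ℕ) : ℤ)) ∣ ((x : ℤ) - (y : ℤ))) := by
      intro x y hx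
      constructor
      · intro h
        have hmeq : y % (2 * L) = x % (2 * L) := by rw [Nat.mod_eq_of_lt hx, h]
        exact (Nat.modEq_iff_dvd).mp hmeq
      · intro h
        have hmeq : y ≡ x [MOD 2 * L] := (Nat.modEq_iff_dvd).mpr h
        rw [← Nat.mod_eq_of_lt hx]
        exact hmeq.symm
    have hiff1 : (j = fsucc k) ↔ (2 * (L : ℤ)) ∣ (D - 1) := by
      rw [Fin.ext_iff]
      rw [show ((fsucc k : Fin (2 * L)) : ℕ) = (b + 1) % (2 * L) from rfl]
      rw [hmod a (b + 1) haL]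
      rw [show ((a : ℤ) - ((b + 1 : ℕ) : ℤ)) = D - 1 by rw [hD]; push_cast; ring]
      rw [show (((2 * L : ℕ) : ℤ)) = 2 * (L : ℤ) by push_cast; ring]
    have hiff2 : (k = fsucc j) ↔ (2 * (L : ℤ)) ∣ (D + 1) := by
      rw [Fin.ext_iff]
      rw [show ((fsucc j : Fin (2 * L)) : ℕ) = (a + 1) % (2 * L) from rfl]
      rw [hmod b (a + 1) hbL]
      rw [show ((b : ℤ) - ((a + 1 : ℕ) : ℤ)) = -(D + 1) by rw [hD]; push_cast; ring]
      rw [show (((2 * L : ℕ) : ℤ)) = 2 * (L : ℤ) by push_cast; ring]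
      exact dvd_neg
    have hjkne : j ≠ k := by
      intro h
      have : a = b := congrArg Fin.val h
      omega
    unfold BL
    rw [if_neg hjkne, hphs]
    by_cases d1 : (2 * (L : ℤ)) ∣ (D - 1) <;> by_cases d2 : (2 * (L : ℤ)) ∣ (D + 1)
    · rw [if_pos (hiff1.mpr d1), if_pos (hiff2.mpr d2), if_pos d1, if_pos d2]
      rw [hinv, show ((2 * L : ℕ) : ℂ) = 2 * (L : ℂ) by push_cast; ring]
      field_simp
      ring
    · rw [if_pos (hiff1.mpr d1), if_neg (fun h => d2 (hiff2.mp h)), if_pos d1, if_neg d2]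
      rw [hinv, show ((2 * L : ℕ) : ℂ) = 2 * (L : ℂ) by push_cast; ring]
      field_simp
      ring
    · rw [if_neg (fun h => d1 (hiff1.mp h)), if_pos (hiff2.mpr d2), if_neg d1, if_pos d2]
      rw [hinv, show ((2 * L : ℕ) : ℂ) = 2 * (L : ℂ) by push_cast; ring]
      field_simp
      ring
    · rw [if_neg (fun h => d1 (hiff1.mp h)), if_neg (fun h => d2 (hiff2.mp h)), if_neg d1, if_neg d2]
      rw [hinv, show ((2 * L : ℕ) : ℂ) = 2 * (L : ℂ) by push_cast; ring]
      field_simp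
      ring



/-- **Almost-diagonal form of the periodic gl(1|1) Hamiltonian** exhibiting its
rank-two Jordan-block structure:
`−Σ_{j=1}^{N} e_j = 2 Σ_{n=1}^{L−1} sin(nπ/L)(χ†_p χ_p − η†_p η_p) + 4 χ₀† η₀`,
with `p = nπ/L`, `χ₀† = θ†_{π/2}` and `η₀ = θ_{3π/2}` (`N = 2L`). -/
theorem gl11_hamiltonian_chi_eta_form (L : ℕ) (hL : 0 < L) :
    -(∑ j : Fin (2 * L), e (2 * L) j) =
      (2 : ℂ) • (∑ n ∈ Finset.Ico 1 L,
        ((Real.sin (n * Real.pi / L) : ℝ) : ℂ) •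
          (chid (2 * L) (n * Real.pi / L) * chi (2 * L) (n * Real.pi / L)
            - etad (2 * L) (n * Real.pi / L) * eta (2 * L) (n * Real.pi / L)))
      + (4 : ℂ) • (thetad (2 * L) (Real.pi/2) * theta (2 * L) (3 * Real.pi/2)) := by
  have hN2 : 2 ≤ 2 * L := by omega
  have hNe : Even (2 * L) := ⟨L, two_mul L⟩
  have hterm : ∀ n ∈ Finset.Ico 1 L,
      ((Real.sin (n * Real.pi / L) : ℝ) : ℂ) •
          (chid (2 * L) (n * Real.pi / L) * chi (2 * L) (n * Real.pi / L)
            - etad (2 * L) (n * Real.pi / L) * eta (2 * L) (n * Real.pi / L))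
        = Dq (2 * L) fun j k =>
            ((Real.sin (n * Real.pi / L) : ℝ) : ℂ) *
              (((Real.tan (n * Real.pi / L / 2) : ℝ) : ℂ) *
                (((2 * L : ℕ) : ℂ)⁻¹ *
                  (Complex.exp (I * ((j : ℕ) + 1) * ((n * Real.pi / L - Real.pi/2 : ℝ) : ℂ))
                    * Complex.exp (-(I * ((k : ℕ) + 1) * ((n * Real.pi / L + Real.pi/2 : ℝ) : ℂ)))))
              + ((Real.cot (n * Real.pi / L / 2) : ℝ) : ℂ) *
                (((2 * L : ℕ) : ℂ)⁻¹ *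
                  (Complex.exp (I * ((j : ℕ) + 1) * ((n * Real.pi / L + Real.pi/2 : ℝ) : ℂ))
                    * Complex.exp (-(I * ((k : ℕ) + 1) * ((n * Real.pi / L - Real.pi/2 : ℝ) : ℂ)))))) := by
    intro n hn
    obtain ⟨hn1, hn2⟩ := Finset.mem_Ico.mp hn
    have hLpos : (0 : ℝ) < L := by exact_mod_cast hL
    have hp0 : 0 < (n : ℝ) * Real.pi / L := by
      apply div_pos (mul_pos (by exact_mod_cast hn1) Real.pi_pos) hLpos
    have hp1 : (n : ℝ) * Real.pi / L / 2 < Real.pi / 2 := by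
      have : (n : ℝ) * Real.pi / L < Real.pi := by
        rw [div_lt_iff₀ hLpos]
        have : (n : ℝ) < L := by exact_mod_cast hn2
        nlinarith [Real.pi_pos]
      linarith
    have htan : 0 ≤ Real.tan ((n : ℝ) * Real.pi / L / 2) :=
      le_of_lt (Real.tan_pos_of_pos_of_lt_pi_div_two (by linarith) hp1)
    have hcot : 0 ≤ Real.cot ((n : ℝ) * Real.pi / L / 2) := by
      rw [Real.cot_eq_cos_div_sin]
      apply le_of_lt (div_pos ?_ ?_)
      · exact Real.cos_pos_of_mem_Ioo ⟨by linarith [Real.pi_pos], hp1⟩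
      · exact Real.sin_pos_of_pos_of_lt_pi (by linarith) (by linarith [Real.pi_pos, hp1])
    rw [chid_chi_sub (2 * L) (n * Real.pi / L) htan hcot,
      thetad_mul_theta, thetad_mul_theta, Dq_smul, Dq_smul, Dq_add, Dq_smul]
  rw [lhs_eq (2 * L) hNe hN2, Finset.sum_congr rfl hterm, Dq_sum, thetad_mul_theta,
    Dq_smul, Dq_smul, Dq_add]
  refine congrArg (Dq (2 * L)) (funext fun j => funext fun k => ?_)
  exact crux L hL j k

end SpinChain

end
end

section
/- On the periodic gl(1|1) spin chain with N = 2L sites, the quadratic quantum-group generator fails to commute only with the boundary Temperley–Lieb generator, with explicit obstruction: [e_j, F_(2)] = 0 and [e_j, F†_(2)] = 0 for all 1 ≤ j ≤ N−1, while [e_N, F_(2)] = −2(f_N + f_1)·F_(1) and [e_N, F†_(2)] = 2(f_N† + f_1†)·F†_(1); in particular, [e_N, F_(2)] ≠ 0 whenever L ≥ 2. -/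
open Complex Matrix

noncomputable section

namespace SpinChain

variable (N : ℕ)

lemma sigmaMinus_eq_s6 : sigmaMinus = Matrix.of fun r c => if r = 1 ∧ c = 0 then (1:ℂ) else 0 := by
  simp only [sigmaMinus, sigmaX, sigmaY]
  ext r c
  fin_cases r <;> fin_cases c <;> simp [Complex.ext_iff] <;> norm_num

lemma sigmaPlus_eq_s6 : sigmaPlus = Matrix.of fun r c => if r = 0 ∧ c = 1 then (1:ℂ) else 0 := by
  simp only [sigmaPlus, sigmaX, sigmaY]
  ext r c
  fin_cases r <;> fin_cases c <;> simp [Complex.ext_iff] <;> norm_num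

lemma site_diagonal (z : Fin 2 → ℂ) (k : Fin N) :
    site N (Matrix.diagonal z) k = Matrix.diagonal (fun x => z (x k)) := by
  ext x y
  by_cases h : x = y
  · subst h
    simp [site, Matrix.diagonal]
  · simp only [site, Matrix.of_apply, Matrix.diagonal_apply_ne _ h]
    by_cases hk : x k = y k
    · obtain ⟨m, hm⟩ : ∃ m, x m ≠ y m := by
        by_contra hc
        push_neg at hc
        exact h (funext hc)
      have hmk : m ≠ k := fun e => hm (e ▸ hk)
      rw [Finset.prod_eq_zero (i := m) (by simp [hmk]) (by simp [hm])]
      ring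
    · simp [Matrix.diagonal_apply_ne _ hk]

lemma string_diag (z : Fin 2 → ℂ) (j : Fin N) :
    string N z j =
      Matrix.diagonal (fun x => ∏ k ∈ Finset.univ.filter (fun k => k < j), z (x k)) := by
  have key : ∀ l : List (Fin N),
      ((l.map (fun k => site N (Matrix.diagonal z) k)).prod : Op N) =
        Matrix.diagonal (fun x => (l.map (fun k => z (x k))).prod) := by
    intro l
    induction l with
    | nil => simp
    | cons a t ih =>
        rw [List.map_cons, List.prod_cons, ih, site_diagonal, Matrix.diagonal_mul_diagonal]
        simp
  rw [string, key]
  have : ∀ x : Fin N → Fin 2,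
      ((((List.finRange N).filter (fun k => decide (k < j))).map (fun k => z (x k))).prod)
        = ∏ k ∈ Finset.univ.filter (fun k => k < j), z (x k) := by
    intro x
    have hnd : ((List.finRange N).filter (fun k => decide (k < j))).Nodup :=
      List.Nodup.filter _ (List.nodup_finRange N)
    rw [show Finset.univ.filter (fun k => k < j)
          = ((List.finRange N).filter (fun k => decide (k < j))).toFinset by
        ext m; simp [List.mem_filter],
      List.prod_toFinset _ hnd]
  simp only [this]

def zz : Fin 2 → ℂ := ![-I, I]

def Pz {N : ℕ} (j : Fin N) (x : Fin N → Fin 2) : ℂ :=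
  ∏ k ∈ Finset.univ.filter (fun k => k < j), zz (x k)

lemma card_filter_lt (j : Fin N) :
    (Finset.univ.filter (fun k : Fin N => k < j)).card = (j : ℕ) := by
  have : Finset.univ.filter (fun k : Fin N => k < j) = Finset.Iio j := by
    ext m; simp
  rw [this, Fin.card_Iio]

lemma site_rc (r cc : Fin 2) (j : Fin N) (x y : Fin N → Fin 2) :
    site N (Matrix.of fun a b => if a = r ∧ b = cc then (1:ℂ) else 0) j x y
      = if x j = r ∧ y = Function.update x j cc then 1 else 0 := by
  simp only [site, Matrix.of_apply]
  rw [Finset.prod_boole]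
  by_cases h1 : x j = r
  · by_cases h2 : y = Function.update x j cc
    · subst h2
      have hall : ∀ k ∈ Finset.univ.filter (fun k : Fin N => k ≠ j), x k = Function.update x j cc k := by
        intro k hk
        simp only [Finset.mem_filter] at hk
        rw [Function.update_of_ne hk.2]
      simp only [h1, Finset.mem_filter] at hall ⊢
      simp [h1]
      intro k hk
      rw [Function.update_of_ne hk]
    · simp only [h1, true_and, if_neg h2]
      by_cases h3 : y j = cc
      · have : ¬ ∀ k ∈ Finset.univ.filter (fun k => k ≠ j), x k = y k := by
          intro hc
          apply h2
          funext m
          by_cases hm : m = j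
          · subst hm; simp [h3]
          · rw [Function.update_of_ne hm]
            exact (hc m (by simp [hm])).symm
        push_neg at this
        simpa [h1, h3] using this
      · simp [h3]
  · simp [h1]

lemma f_apply (j : Fin N) (x y : Fin N → Fin 2) :
    f N j x y = if x j = 1 ∧ y = Function.update x j 0 then I * Pz j x else 0 := by
  have hs : f N j = I • (string N ![-I, I] j * site N sigmaMinus j) := by
    rw [f, c, smul_smul]
    congr 1
    rw [show (I : ℂ) ^ ((j:ℕ) + 1) = I ^ (((j:ℕ) : ℤ) + 1) by rw [← zpow_natCast]; push_cast; ring_nf,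
      ← zpow_add₀ Complex.I_ne_zero]
    simp
  rw [hs]
  have hstr := string_diag N ![-I, I] j
  rw [Matrix.smul_apply, Matrix.mul_apply]
  simp only [hstr, sigmaMinus_eq_s6]
  rw [Finset.sum_eq_single x]
  · rw [Matrix.diagonal_apply_eq, site_rc]
    have hP : ∏ k ∈ Finset.univ.filter (fun k => k < j), (![-I, I] : Fin 2 → ℂ) (x k) = Pz j x := rfl
    rw [hP]
    by_cases h : x j = 1 ∧ y = Function.update x j 0 <;> simp [h, mul_comm]
  · intro b _ hb
    rw [Matrix.diagonal_apply_ne' _ hb, zero_mul]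
  · simp

lemma fd_apply (j : Fin N) (x y : Fin N → Fin 2) :
    fd N j x y = if x j = 0 ∧ y = Function.update x j 1 then I * Pz j x else 0 := by
  have hz : ∀ v : Fin 2, (![I, -I] : Fin 2 → ℂ) v = - zz v := by
    intro v; fin_cases v <;> simp [zz]
  have hs : fd N j = (I ^ (2 * (j:ℕ) + 1)) • (string N ![I, -I] j * site N sigmaPlus j) := by
    rw [fd, cd, smul_smul, ← pow_add]
    ring_nf
  rw [hs]
  have hstr := string_diag N ![I, -I] j
  rw [Matrix.smul_apply, Matrix.mul_apply]
  simp only [hstr, sigmaPlus_eq_s6]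
  rw [Finset.sum_eq_single x]
  · rw [Matrix.diagonal_apply_eq, site_rc]
    have h1 : ∏ k ∈ Finset.univ.filter (fun k => k < j), (![I, -I] : Fin 2 → ℂ) (x k)
        = (-1) ^ (j : ℕ) * Pz j x := by
      rw [Pz, ← card_filter_lt N j, ← Finset.prod_const (-1 : ℂ), ← Finset.prod_mul_distrib]
      exact Finset.prod_congr rfl (fun k _ => by rw [hz]; ring)
    rw [h1]
    have h2 : (I : ℂ) ^ (2 * (j:ℕ) + 1) = (-1) ^ (j:ℕ) * I := by
      rw [pow_add, pow_mul, Complex.I_sq]; ring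
    by_cases h : x j = 0 ∧ y = Function.update x j 1
    · simp only [h, and_self, if_true, mul_one, smul_eq_mul, h2]
      have hsq : ((-1:ℂ)^(j:ℕ)) * ((-1:ℂ)^(j:ℕ)) = 1 := by
        rw [← pow_add, ← two_mul, pow_mul]; norm_num
      linear_combination (I * Pz j x) * hsq
    · simp [h]
  · intro b _ hb
    rw [Matrix.diagonal_apply_ne' _ hb, zero_mul]
  · simp

lemma zz_ne {v w : Fin 2} (h : v ≠ w) : zz v = - zz w := by
  fin_cases v <;> fin_cases w <;> simp_all [zz]

lemma zz_sq (v : Fin 2) : zz v * zz v = -1 := by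
  fin_cases v
  · show (-I) * (-I) = -1
    rw [neg_mul_neg, Complex.I_mul_I]
  · show I * I = -1
    exact Complex.I_mul_I

lemma Pz_update_nlt {j k : Fin N} (h : ¬ k < j) (x : Fin N → Fin 2) (v : Fin 2) :
    Pz j (Function.update x k v) = Pz j x := by
  refine Finset.prod_congr rfl fun m hm => ?_
  simp only [Finset.mem_filter] at hm
  rw [Function.update_of_ne (fun e => h (by rw [← e]; exact hm.2))]

lemma Pz_update_lt {j k : Fin N} (h : k < j) (x : Fin N → Fin 2) {v : Fin 2} (hv : v ≠ x k) :
    Pz j (Function.update x k v) = - Pz j x := by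
  have hmem : k ∈ Finset.univ.filter (fun m : Fin N => m < j) := by simp [h]
  have h1 : (fun m => zz (Function.update x k v m))
      = Function.update (fun m => zz (x m)) k (zz v) := by
    funext m
    by_cases hm : m = k
    · subst hm; simp
    · simp [Function.update_of_ne hm]
  unfold Pz
  calc ∏ m ∈ Finset.univ.filter (fun m : Fin N => m < j), zz (Function.update x k v m)
      = ∏ m ∈ Finset.univ.filter (fun m : Fin N => m < j),
          Function.update (fun m => zz (x m)) k (zz v) m := by
        exact Finset.prod_congr rfl fun m _ => congrFun h1 m
    _ = zz v * ∏ m ∈ (Finset.univ.filter (fun m : Fin N => m < j)) \ {k}, zz (x m) :=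
        Finset.prod_update_of_mem hmem _ _
    _ = - (zz (x k) * ∏ m ∈ ((Finset.univ.filter (fun m : Fin N => m < j)).erase k), zz (x m)) := by
        rw [Finset.erase_eq, zz_ne hv]; ring
    _ = - ∏ m ∈ Finset.univ.filter (fun m : Fin N => m < j), zz (x m) := by
        rw [← Finset.mul_prod_erase _ (fun m => zz (x m)) hmem]

lemma Pz_sq (j : Fin N) (x : Fin N → Fin 2) : Pz j x * Pz j x = (-1) ^ (j : ℕ) := by
  rw [Pz, ← Finset.prod_mul_distrib,
    Finset.prod_congr rfl (fun m _ => zz_sq (x m)), Finset.prod_const, card_filter_lt]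

lemma mul_apply_ite (a : ℂ) (p : Prop) [Decidable p] (u : Fin N → Fin 2) (B : Op N)
    (y : Fin N → Fin 2) :
    ∑ w : Fin N → Fin 2, (if p ∧ w = u then a else 0) * B w y
      = if p then a * B u y else 0 := by
  by_cases h : p
  · simp only [h, true_and]
    rw [Finset.sum_eq_single u]
    · simp
    · intro b _ hb; simp [hb]
    · simp
  · simp [h]

lemma f_mul_apply (j : Fin N) (B : Op N) (x y : Fin N → Fin 2) :
    (f N j * B) x y = if x j = 1 then (I * Pz j x) * B (Function.update x j 0) y else 0 := by
  rw [Matrix.mul_apply]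
  simp only [f_apply]
  exact mul_apply_ite N _ _ _ _ _

lemma fd_mul_apply (j : Fin N) (B : Op N) (x y : Fin N → Fin 2) :
    (fd N j * B) x y = if x j = 0 then (I * Pz j x) * B (Function.update x j 1) y else 0 := by
  rw [Matrix.mul_apply]
  simp only [fd_apply]
  exact mul_apply_ite N _ _ _ _ _

lemma fin2_eq_zero_of_ne_one {v : Fin 2} (h : v ≠ 1) : v = 0 := by omega
lemma fin2_eq_one_of_ne_zero {v : Fin 2} (h : v ≠ 0) : v = 1 := by omega

lemma car_ff (j k : Fin N) : f N j * f N k + f N k * f N j = 0 := by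
  ext x y
  rw [Matrix.add_apply, f_mul_apply, f_mul_apply, Matrix.zero_apply, f_apply, f_apply]
  by_cases hjk : j = k
  · subst hjk
    by_cases h : x j = 1 <;> simp [h, Function.update_self]
  · by_cases h1 : x j = 1 <;> by_cases h2 : x k = 1
    · rw [if_pos h1, if_pos h2,
        Function.update_of_ne (fun e => hjk (e.symm)) , Function.update_of_ne hjk]
      have hu : Function.update (Function.update x j 0) k 0
          = Function.update (Function.update x k 0) j 0 := Function.update_comm hjk _ _ _
      rw [hu]
      by_cases hy : y = Function.update (Function.update x k 0) j 0
      · rw [if_pos ⟨h2, hy⟩, if_pos ⟨h1, hy⟩]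
        have hv1 : (0 : Fin 2) ≠ x j := by rw [h1]; decide
        have hv2 : (0 : Fin 2) ≠ x k := by rw [h2]; decide
        rcases lt_trichotomy j k with h | h | h
        · rw [Pz_update_lt N h x hv1, Pz_update_nlt N (not_lt.mpr h.le) x 0]
          ring
        · exact absurd h hjk
        · rw [Pz_update_lt N h x hv2, Pz_update_nlt N (not_lt.mpr h.le) x 0]
          ring
      · rw [if_neg (fun hc => hy hc.2), if_neg (fun hc => hy hc.2)]
        ring
    · rw [if_pos h1, if_neg h2, Function.update_of_ne (fun e => hjk (e.symm))]
      rw [if_neg (fun hc => h2 hc.1)]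
      ring
    · rw [if_neg h1, if_pos h2, Function.update_of_ne hjk, if_neg (fun hc => h1 hc.1)]
      ring
    · rw [if_neg h1, if_neg h2]
      ring

lemma car_dd (j k : Fin N) : fd N j * fd N k + fd N k * fd N j = 0 := by
  ext x y
  rw [Matrix.add_apply, fd_mul_apply, fd_mul_apply, Matrix.zero_apply, fd_apply, fd_apply]
  by_cases hjk : j = k
  · subst hjk
    by_cases h : x j = 0 <;> simp [h, Function.update_self]
  · by_cases h1 : x j = 0 <;> by_cases h2 : x k = 0
    · rw [if_pos h1, if_pos h2,
        Function.update_of_ne (fun e => hjk (e.symm)) , Function.update_of_ne hjk]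
      have hu : Function.update (Function.update x j 1) k 1
          = Function.update (Function.update x k 1) j 1 := Function.update_comm hjk _ _ _
      rw [hu]
      by_cases hy : y = Function.update (Function.update x k 1) j 1
      · rw [if_pos ⟨h2, hy⟩, if_pos ⟨h1, hy⟩]
        have hv1 : (1 : Fin 2) ≠ x j := by rw [h1]; decide
        have hv2 : (1 : Fin 2) ≠ x k := by rw [h2]; decide
        rcases lt_trichotomy j k with h | h | h
        · rw [Pz_update_lt N h x hv1, Pz_update_nlt N (not_lt.mpr h.le) x 1]
          ring
        · exact absurd h hjk
        · rw [Pz_update_lt N h x hv2, Pz_update_nlt N (not_lt.mpr h.le) x 1]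
          ring
      · rw [if_neg (fun hc => hy hc.2), if_neg (fun hc => hy hc.2)]
        ring
    · rw [if_pos h1, if_neg h2, Function.update_of_ne (fun e => hjk (e.symm))]
      rw [if_neg (fun hc => h2 hc.1)]
      ring
    · rw [if_neg h1, if_pos h2, Function.update_of_ne hjk, if_neg (fun hc => h1 hc.1)]
      ring
    · rw [if_neg h1, if_neg h2]
      ring

lemma car_fd (j k : Fin N) :
    f N j * fd N k + fd N k * f N j
      = if j = k then (((-1 : ℂ) ^ ((j : ℕ) + 1)) • (1 : Op N)) else 0 := by
  ext x y
  rw [Matrix.add_apply, f_mul_apply, fd_mul_apply, f_apply, fd_apply]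
  by_cases hjk : j = k
  · subst hjk
    rw [if_pos rfl, Matrix.smul_apply, Matrix.one_apply]
    have key : ∀ v : Fin 2, x j = v →
        Function.update (Function.update x j (1 - v)) j v = x := by
      intro v hv
      rw [Function.update_idem, ← hv, Function.update_eq_self]
    by_cases h1 : x j = 1
    · have h0 : ¬ x j = 0 := by rw [h1]; decide
      rw [if_pos h1, if_neg h0, Function.update_self]
      have hx : Function.update (Function.update x j 0) j 1 = x := key 1 h1
      rw [hx, Pz_update_nlt N (lt_irrefl j) x 0]
      by_cases hy : y = x
      · subst hy
        rw [if_pos ⟨rfl, rfl⟩, if_pos rfl, smul_eq_mul, mul_one, pow_succ]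
        have hP := Pz_sq N j y
        linear_combination (I*I) * hP + ((-1:ℂ)^((j:ℕ))) * Complex.I_mul_I
      · rw [if_neg (fun hc => hy hc.2), if_neg (fun hc => hy (hc.symm))]
        simp
    · have h0 : x j = 0 := fin2_eq_zero_of_ne_one h1
      rw [if_neg h1, if_pos h0, Function.update_self]
      have hx : Function.update (Function.update x j 1) j 0 = x := key 0 h0
      rw [hx, Pz_update_nlt N (lt_irrefl j) x 1]
      by_cases hy : y = x
      · subst hy
        rw [if_pos ⟨rfl, rfl⟩, if_pos rfl, smul_eq_mul, mul_one, pow_succ]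
        have hP := Pz_sq N j y
        linear_combination (I*I) * hP + ((-1:ℂ)^((j:ℕ))) * Complex.I_mul_I
      · rw [if_neg (fun hc => hy hc.2), if_neg (fun hc => hy (hc.symm))]
        simp
  · rw [if_neg hjk, Matrix.zero_apply]
    by_cases h1 : x j = 1 <;> by_cases h2 : x k = 0
    · rw [if_pos h1, if_pos h2,
        Function.update_of_ne (fun e => hjk (e.symm)), Function.update_of_ne hjk]
      have hu : Function.update (Function.update x j 0) k 1
          = Function.update (Function.update x k 1) j 0 := Function.update_comm hjk _ _ _
      rw [hu]
      by_cases hy : y = Function.update (Function.update x k 1) j 0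
      · rw [if_pos ⟨h2, hy⟩, if_pos ⟨h1, hy⟩]
        have hv1 : (0 : Fin 2) ≠ x j := by rw [h1]; decide
        have hv2 : (1 : Fin 2) ≠ x k := by rw [h2]; decide
        rcases lt_trichotomy j k with h | h | h
        · rw [Pz_update_lt N h x hv1, Pz_update_nlt N (not_lt.mpr h.le) x 1]
          ring
        · exact absurd h hjk
        · rw [Pz_update_lt N h x hv2, Pz_update_nlt N (not_lt.mpr h.le) x 0]
          ring
      · rw [if_neg (fun hc => hy hc.2), if_neg (fun hc => hy hc.2)]
        ring
    · rw [if_pos h1, if_neg h2, Function.update_of_ne (fun e => hjk (e.symm)),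
        if_neg (fun hc => h2 hc.1)]
      ring
    · rw [if_neg h1, if_pos h2, Function.update_of_ne hjk, if_neg (fun hc => h1 hc.1)]
      ring
    · rw [if_neg h1, if_neg h2]
      ring


lemma sort_pair {a b : Fin N} (h : a < b) :
    ({a, b} : Finset (Fin N)).sort (· ≤ ·) = [a, b] := by
  rw [show ({a, b} : Finset (Fin N)) = insert a {b} from rfl,
    Finset.sort_insert (· ≤ ·) (fun c hc => by
      simp only [Finset.mem_singleton] at hc; exact hc ▸ h.le)
      (by simp [Finset.mem_singleton]; exact h.ne),
    Finset.sort_singleton]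

lemma sum_pc_one (g : Fin N → Op N) :
    ∑ s ∈ (Finset.univ : Finset (Fin N)).powersetCard 1, ((s.sort (· ≤ ·)).map g).prod
      = ∑ a : Fin N, g a := by
  refine Finset.sum_bij (fun (a : Fin N) _ => ({a} : Finset (Fin N))) ?_ ?_ ?_ ?_ |>.symm
  · intro a _
    simp [Finset.mem_powersetCard]
  · intro a _ b _ hab
    simpa using hab
  · intro s hs
    rw [Finset.mem_powersetCard] at hs
    obtain ⟨a, rfl⟩ := Finset.card_eq_one.mp hs.2
    exact ⟨a, by simp, rfl⟩
  · intro a _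
    rw [Finset.sort_singleton]
    simp

lemma sum_pc_two (g : Fin N → Op N) :
    ∑ s ∈ (Finset.univ : Finset (Fin N)).powersetCard 2, ((s.sort (· ≤ ·)).map g).prod
      = ∑ b : Fin N, ∑ a ∈ Finset.univ.filter (fun a => a < b), g a * g b := by
  have h1 : ∀ b : Fin N, ∑ a ∈ Finset.univ.filter (fun a => a < b), g a * g b
      = ∑ a : Fin N, if a < b then g a * g b else 0 := fun b => (Finset.sum_filter _ _)
  have h2 : ∑ b : Fin N, ∑ a : Fin N, (if a < b then g a * g b else 0)
      = ∑ p ∈ (Finset.univ ×ˢ Finset.univ : Finset (Fin N × Fin N)).filter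
          (fun p => p.1 < p.2), g p.1 * g p.2 := by
    rw [Finset.sum_filter, Finset.sum_product]
    exact Finset.sum_comm
  simp only [h1]
  rw [h2]
  refine Finset.sum_bij (fun (p : Fin N × Fin N) _ => ({p.1, p.2} : Finset (Fin N))) ?_ ?_ ?_ ?_ |>.symm
  · intro p hp
    simp only [Finset.mem_filter] at hp
    rw [Finset.mem_powersetCard]
    exact ⟨Finset.subset_univ _, Finset.card_pair hp.2.ne⟩
  · intro p hp q hq hpq
    simp only [Finset.mem_filter] at hp hq
    have hpq' : ({p.1, p.2} : Finset (Fin N)) = {q.1, q.2} := hpq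
    have h1 : p.1 ∈ ({q.1, q.2} : Finset (Fin N)) := by rw [← hpq']; simp
    have h2 : p.2 ∈ ({q.1, q.2} : Finset (Fin N)) := by rw [← hpq']; simp
    have h3 : q.1 ∈ ({p.1, p.2} : Finset (Fin N)) := by rw [hpq']; simp
    simp only [Finset.mem_insert, Finset.mem_singleton] at h1 h2 h3
    have hv1 : p.1.val < p.2.val := hp.2
    have hv2 : q.1.val < q.2.val := hq.2
    have : p.1 = q.1 ∧ p.2 = q.2 := by
      rcases h1 with e1 | e1 <;> rcases h2 with e2 | e2 <;>
        · have v1 := congrArg Fin.val e1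
          have v2 := congrArg Fin.val e2
          constructor <;> (apply Fin.ext; omega)
    exact Prod.ext this.1 this.2
  · intro s hs
    rw [Finset.mem_powersetCard] at hs
    obtain ⟨a, b, hab, rfl⟩ := Finset.card_eq_two.mp hs.2
    rcases (Ne.lt_or_gt hab) with h | h
    · exact ⟨(a, b), by simp [h], rfl⟩
    · exact ⟨(b, a), by simp [h], by rw [Finset.pair_comm]⟩
  · intro p hp
    simp only [Finset.mem_filter] at hp
    rw [sort_pair N hp.2]
    simp

lemma Fg_two : Fg N 2 = ∑ b : Fin N, ∑ a ∈ Finset.univ.filter (fun a => a < b), f N a * f N b :=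
  sum_pc_two N (f N)

lemma Fdg_two : Fdg N 2 = ∑ b : Fin N, ∑ a ∈ Finset.univ.filter (fun a => a < b), fd N a * fd N b :=
  sum_pc_two N (fd N)

lemma Fg_one : Fg N 1 = ∑ a : Fin N, f N a := sum_pc_one N (f N)
lemma Fdg_one : Fdg N 1 = ∑ a : Fin N, fd N a := sum_pc_one N (fd N)

def eps {N : ℕ} (j : Fin N) : ℂ := (-1) ^ ((j : ℕ) + 1)

lemma swap_ff (p q : Fin N) : f N p * f N q = -(f N q * f N p) :=
  eq_neg_of_add_eq_zero_left (car_ff N p q)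

lemma swap_dd (p q : Fin N) : fd N p * fd N q = -(fd N q * fd N p) :=
  eq_neg_of_add_eq_zero_left (car_dd N p q)

lemma f_sq (p : Fin N) : f N p * f N p = 0 := by
  have h := car_ff N p p
  have h2 : (2 : ℂ) • (f N p * f N p) = 0 := by rw [two_smul]; exact h
  exact (smul_eq_zero.mp h2).resolve_left (by norm_num)

lemma fd_sq (p : Fin N) : fd N p * fd N p = 0 := by
  have h := car_dd N p p
  have h2 : (2 : ℂ) • (fd N p * fd N p) = 0 := by rw [two_smul]; exact h
  exact (smul_eq_zero.mp h2).resolve_left (by norm_num)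

lemma fd_mul_f (m a : Fin N) :
    fd N m * f N a = (if a = m then eps m else 0) • (1 : Op N) - f N a * fd N m := by
  have h := car_fd N a m
  have h2 : (if a = m then (((-1 : ℂ) ^ ((a : ℕ) + 1)) • (1 : Op N)) else 0)
      = (if a = m then eps m else 0) • (1 : Op N) := by
    split
    · next hh => rw [hh]; rfl
    · simp
  rw [h2] at h
  exact eq_sub_of_add_eq' h

lemma f_mul_fd_s6 (m a : Fin N) :
    f N m * fd N a = (if m = a then eps m else 0) • (1 : Op N) - fd N a * f N m := by
  have h := car_fd N m a
  have h2 : (if m = a then (((-1 : ℂ) ^ ((m : ℕ) + 1)) • (1 : Op N)) else 0)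
      = (if m = a then eps m else 0) • (1 : Op N) := by
    split
    · rfl
    · simp
  rw [h2] at h
  exact eq_sub_of_add_eq h

lemma comm_fd_pair (m a b : Fin N) :
    fd N m * (f N a * f N b) - (f N a * f N b) * fd N m
      = (if a = m then eps m else 0) • f N b - (if b = m then eps m else 0) • f N a := by
  rw [← mul_assoc, fd_mul_f N m a, sub_mul, smul_mul_assoc, one_mul, mul_assoc,
    fd_mul_f N m b, mul_sub, mul_smul_comm, mul_one, ← mul_assoc]
  abel

lemma comm_f_pair (m a b : Fin N) :
    f N m * (fd N a * fd N b) - (fd N a * fd N b) * f N m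
      = (if m = a then eps m else 0) • fd N b - (if m = b then eps m else 0) • fd N a := by
  rw [← mul_assoc, f_mul_fd_s6 N m a, sub_mul, smul_mul_assoc, one_mul, mul_assoc,
    f_mul_fd_s6 N m b, mul_sub, mul_smul_comm, mul_one, ← mul_assoc]
  abel

lemma comm_fd_Fg2 (m : Fin N) :
    fd N m * Fg N 2 - Fg N 2 * fd N m
      = eps m • ((∑ b ∈ Finset.univ.filter (fun b => m < b), f N b)
          - ∑ a ∈ Finset.univ.filter (fun a => a < m), f N a) := by
  rw [Fg_two]
  rw [Finset.mul_sum, Finset.sum_mul, ← Finset.sum_sub_distrib]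
  have step : ∀ b : Fin N,
      fd N m * (∑ a ∈ Finset.univ.filter (fun a => a < b), f N a * f N b)
        - (∑ a ∈ Finset.univ.filter (fun a => a < b), f N a * f N b) * fd N m
      = (if m < b then eps m • f N b else 0)
        - (if b = m then ∑ a ∈ Finset.univ.filter (fun a => a < b), eps m • f N a else 0) := by
    intro b
    rw [Finset.mul_sum, Finset.sum_mul, ← Finset.sum_sub_distrib]
    simp only [comm_fd_pair]
    rw [Finset.sum_sub_distrib]
    congr 1
    · simp only [ite_smul, zero_smul]
      rw [Finset.sum_ite_eq' (Finset.univ.filter (fun a => a < b)) m (fun _ => eps m • f N b)]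
      simp only [Finset.mem_filter, Finset.mem_univ, true_and]
    · simp only [ite_smul, zero_smul, Finset.sum_ite_irrel, Finset.sum_const_zero]
  simp only [step]
  rw [Finset.sum_sub_distrib,
    Finset.sum_ite_eq' Finset.univ m
      (fun x => ∑ a ∈ Finset.univ.filter (fun a => a < x), eps m • f N a),
    if_pos (Finset.mem_univ m), smul_sub, Finset.smul_sum, Finset.smul_sum,
    ← Finset.sum_filter]

lemma comm_f_Fdg2 (m : Fin N) :
    f N m * Fdg N 2 - Fdg N 2 * f N m
      = eps m • ((∑ b ∈ Finset.univ.filter (fun b => m < b), fd N b)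
          - ∑ a ∈ Finset.univ.filter (fun a => a < m), fd N a) := by
  rw [Fdg_two]
  rw [Finset.mul_sum, Finset.sum_mul, ← Finset.sum_sub_distrib]
  have step : ∀ b : Fin N,
      f N m * (∑ a ∈ Finset.univ.filter (fun a => a < b), fd N a * fd N b)
        - (∑ a ∈ Finset.univ.filter (fun a => a < b), fd N a * fd N b) * f N m
      = (if m < b then eps m • fd N b else 0)
        - (if m = b then ∑ a ∈ Finset.univ.filter (fun a => a < b), eps m • fd N a else 0) := by
    intro b
    rw [Finset.mul_sum, Finset.sum_mul, ← Finset.sum_sub_distrib]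
    simp only [comm_f_pair]
    rw [Finset.sum_sub_distrib]
    congr 1
    · simp only [ite_smul, zero_smul]
      rw [Finset.sum_ite_eq (Finset.univ.filter (fun a => a < b)) m (fun _ => eps m • fd N b)]
      simp only [Finset.mem_filter, Finset.mem_univ, true_and]
    · simp only [ite_smul, zero_smul, Finset.sum_ite_irrel, Finset.sum_const_zero]
  simp only [step]
  rw [Finset.sum_sub_distrib,
    Finset.sum_ite_eq Finset.univ m
      (fun x => ∑ a ∈ Finset.univ.filter (fun a => a < x), eps m • fd N a),
    if_pos (Finset.mem_univ m), smul_sub, Finset.smul_sum, Finset.smul_sum,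
    ← Finset.sum_filter]

lemma f_comm_Fg2 (t : Fin N) : f N t * Fg N 2 = Fg N 2 * f N t := by
  rw [Fg_two, Finset.mul_sum, Finset.sum_mul]
  refine Finset.sum_congr rfl fun b _ => ?_
  rw [Finset.mul_sum, Finset.sum_mul]
  refine Finset.sum_congr rfl fun a _ => ?_
  rw [← mul_assoc, swap_ff N t a, neg_mul, mul_assoc, swap_ff N t b, mul_neg, neg_neg,
    ← mul_assoc]

lemma fd_comm_Fdg2 (t : Fin N) : fd N t * Fdg N 2 = Fdg N 2 * fd N t := by
  rw [Fdg_two, Finset.mul_sum, Finset.sum_mul]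
  refine Finset.sum_congr rfl fun b _ => ?_
  rw [Finset.mul_sum, Finset.sum_mul]
  refine Finset.sum_congr rfl fun a _ => ?_
  rw [← mul_assoc, swap_dd N t a, neg_mul, mul_assoc, swap_dd N t b, mul_neg, neg_neg,
    ← mul_assoc]

lemma conj_comm_left {A B F : Op N} (hA : A * F = F * A) :
    A * B * F - F * (A * B) = A * (B * F - F * B) := by
  rw [show F * (A * B) = A * (F * B) by rw [← mul_assoc, ← hA, mul_assoc],
    mul_assoc, ← mul_sub]

lemma conj_comm_right {A B F : Op N} (hB : B * F = F * B) :
    A * B * F - F * (A * B) = (A * F - F * A) * B := by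
  rw [mul_assoc, hB, ← mul_assoc, ← mul_assoc, ← sub_mul]

lemma AA_zero (p q : Fin N) : (f N p + f N q) * (f N q + f N p) = 0 := by
  rw [mul_add, add_mul, add_mul, f_sq N p, f_sq N q, add_zero, zero_add]
  exact car_ff N p q

lemma BB_zero (p q : Fin N) : (fd N p + fd N q) * (fd N q + fd N p) = 0 := by
  rw [mul_add, add_mul, add_mul, fd_sq N p, fd_sq N q, add_zero, zero_add]
  exact car_dd N p q

lemma AA_zero' (p q : Fin N) : (f N p + f N q) * (f N p + f N q) = 0 := by
  rw [mul_add, add_mul, add_mul, f_sq N p, f_sq N q, zero_add, add_zero]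
  exact car_ff N q p

lemma BB_zero' (p q : Fin N) : (fd N p + fd N q) * (fd N p + fd N q) = 0 := by
  rw [mul_add, add_mul, add_mul, fd_sq N p, fd_sq N q, zero_add, add_zero]
  exact car_dd N q p

lemma sub_add_sub (W X Y Z : Op N) : (W + X) - (Y + Z) = (W - Y) + (X - Z) := by abel

lemma bulk (j : Fin N) (hj : (j : ℕ) + 1 < N) :
    e N j * Fg N 2 - Fg N 2 * e N j = 0 ∧ e N j * Fdg N 2 - Fdg N 2 * e N j = 0 := by
  have hj' : ((fsucc j : Fin N) : ℕ) = (j : ℕ) + 1 := by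
    simp [fsucc, Nat.mod_eq_of_lt hj]
  set j' := fsucc j with hj'def
  have heps : eps j' = - eps j := by
    rw [eps, eps, hj', pow_succ]; ring
  have hgt : Finset.univ.filter (fun b : Fin N => j < b)
      = insert j' (Finset.univ.filter (fun b => j' < b)) := by
    ext m
    simp only [Finset.mem_insert, Finset.mem_filter, Finset.mem_univ, true_and, Fin.lt_def,
      Fin.ext_iff, hj']
    omega
  have hlt : Finset.univ.filter (fun a : Fin N => a < j')
      = insert j (Finset.univ.filter (fun a => a < j)) := by
    ext m
    simp only [Finset.mem_insert, Finset.mem_filter, Finset.mem_univ, true_and, Fin.lt_def,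
      Fin.ext_iff, hj']
    omega
  have hgt' : j' ∉ Finset.univ.filter (fun b : Fin N => j' < b) := by simp
  have hlt' : j ∉ Finset.univ.filter (fun a : Fin N => a < j) := by simp
  have hsum : ∀ g : Fin N → Op N,
      ((∑ b ∈ Finset.univ.filter (fun b => j < b), g b)
          - ∑ a ∈ Finset.univ.filter (fun a => a < j), g a)
        - ((∑ b ∈ Finset.univ.filter (fun b => j' < b), g b)
          - ∑ a ∈ Finset.univ.filter (fun a => a < j'), g a)
      = g j' + g j := by
    intro g
    rw [hgt, hlt, Finset.sum_insert hgt', Finset.sum_insert hlt']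
    abel
  constructor
  · have hA : (f N j + f N j') * Fg N 2 = Fg N 2 * (f N j + f N j') := by
      rw [add_mul, mul_add, f_comm_Fg2, f_comm_Fg2]
    rw [e, conj_comm_left N hA]
    have hB : (fd N j + fd N j') * Fg N 2 - Fg N 2 * (fd N j + fd N j')
        = eps j • (f N j' + f N j) := by
      rw [add_mul, mul_add, sub_add_sub, comm_fd_Fg2, comm_fd_Fg2, heps, neg_smul,
        ← sub_eq_add_neg, ← smul_sub, hsum]
    rw [hB, mul_smul_comm, AA_zero, smul_zero]
  · have hB : (fd N j + fd N j') * Fdg N 2 = Fdg N 2 * (fd N j + fd N j') := by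
      rw [add_mul, mul_add, fd_comm_Fdg2, fd_comm_Fdg2]
    rw [e, conj_comm_right N hB]
    have hA : (f N j + f N j') * Fdg N 2 - Fdg N 2 * (f N j + f N j')
        = eps j • (fd N j' + fd N j) := by
      rw [add_mul, mul_add, sub_add_sub, comm_f_Fdg2, comm_f_Fdg2, heps, neg_smul,
        ← sub_eq_add_neg, ← smul_sub, hsum]
    rw [hA, smul_mul_assoc, BB_zero, smul_zero]

lemma Fd1_anticomm (q : Fin N) :
    (∑ a : Fin N, fd N a) * fd N q = -(fd N q * ∑ a : Fin N, fd N a) := by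
  rw [Finset.sum_mul, Finset.mul_sum, ← Finset.sum_neg_distrib]
  exact Finset.sum_congr rfl fun a _ => swap_dd N a q

lemma boundary (hN : 2 ≤ N) (hpow : ((-1 : ℂ)) ^ N = 1) :
    (e N ⟨N - 1, by omega⟩ * Fg N 2 - Fg N 2 * e N ⟨N - 1, by omega⟩
      = (-2 : ℂ) • ((f N ⟨N - 1, by omega⟩ + f N ⟨0, by omega⟩) * Fg N 1))
    ∧ (e N ⟨N - 1, by omega⟩ * Fdg N 2 - Fdg N 2 * e N ⟨N - 1, by omega⟩
      = (2 : ℂ) • ((fd N ⟨N - 1, by omega⟩ + fd N ⟨0, by omega⟩) * Fdg N 1)) := by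
  set lst : Fin N := ⟨N - 1, by omega⟩ with hlst
  set zro : Fin N := ⟨0, by omega⟩ with hzro
  have hNN : N - 1 + 1 = N := by omega
  have hsucc : fsucc lst = zro := by
    simp only [fsucc, hlst, hzro, Fin.mk.injEq, hNN, Nat.mod_self]
  have heps_l : eps lst = 1 := by
    rw [eps]
    show ((-1 : ℂ)) ^ (N - 1 + 1) = 1
    rw [hNN]; exact hpow
  have heps_0 : eps zro = -1 := by simp [eps, hzro]
  have hlv : (lst : ℕ) = N - 1 := rfl
  have hzv : (zro : ℕ) = 0 := rfl
  have hfilt1 : Finset.univ.filter (fun b : Fin N => lst < b) = ∅ := by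
    ext m
    have hmN := m.isLt
    simp only [Finset.mem_filter, Finset.mem_univ, true_and, Fin.lt_def, Finset.notMem_empty,
      iff_false, not_lt, hlv]
    omega
  have hfilt2 : Finset.univ.filter (fun a : Fin N => a < lst) = Finset.univ.erase lst := by
    ext m
    have hmN := m.isLt
    simp only [Finset.mem_filter, Finset.mem_univ, true_and, Fin.lt_def, Finset.mem_erase,
      and_true, Fin.ext_iff, hlv]
    omega
  have hfilt3 : Finset.univ.filter (fun b : Fin N => zro < b) = Finset.univ.erase zro := by
    ext m
    have hmN := m.isLt
    simp only [Finset.mem_filter, Finset.mem_univ, true_and, Fin.lt_def, Finset.mem_erase,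
      and_true, Fin.ext_iff, hzv]
    omega
  have hfilt4 : Finset.univ.filter (fun a : Fin N => a < zro) = ∅ := by
    ext m
    have hmN := m.isLt
    simp only [Finset.mem_filter, Finset.mem_univ, true_and, Fin.lt_def, Finset.notMem_empty,
      iff_false, not_lt, hzv]
    omega
  have hsum_er : ∀ (g : Fin N → Op N) (t : Fin N),
      ∑ a ∈ Finset.univ.erase t, g a = (∑ a : Fin N, g a) - g t := fun g t =>
    Finset.sum_erase_eq_sub (Finset.mem_univ t)
  constructor
  · have hA : (f N lst + f N zro) * Fg N 2 = Fg N 2 * (f N lst + f N zro) := by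
      rw [add_mul, mul_add, f_comm_Fg2, f_comm_Fg2]
    rw [e, hsucc, conj_comm_left N hA]
    have hB : (fd N lst + fd N zro) * Fg N 2 - Fg N 2 * (fd N lst + fd N zro)
        = (f N lst + f N zro) - (2 : ℂ) • (∑ a : Fin N, f N a) := by
      rw [add_mul, mul_add, sub_add_sub, comm_fd_Fg2, comm_fd_Fg2, heps_l, heps_0,
        hfilt1, hfilt2, hfilt3, hfilt4, Finset.sum_empty,
        hsum_er, hsum_er, one_smul, neg_one_smul, two_smul]
      abel
    rw [hB, mul_sub, AA_zero' N lst zro, zero_sub, mul_smul_comm, Fg_one]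
    rw [show ((-2 : ℂ)) = -(2 : ℂ) by norm_num, neg_smul]
  · have hB : (fd N lst + fd N zro) * Fdg N 2 = Fdg N 2 * (fd N lst + fd N zro) := by
      rw [add_mul, mul_add, fd_comm_Fdg2, fd_comm_Fdg2]
    rw [e, hsucc, conj_comm_right N hB]
    have hA : (f N lst + f N zro) * Fdg N 2 - Fdg N 2 * (f N lst + f N zro)
        = (fd N lst + fd N zro) - (2 : ℂ) • (∑ a : Fin N, fd N a) := by
      rw [add_mul, mul_add, sub_add_sub, comm_f_Fdg2, comm_f_Fdg2, heps_l, heps_0,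
        hfilt1, hfilt2, hfilt3, hfilt4, Finset.sum_empty,
        hsum_er, hsum_er, one_smul, neg_one_smul, two_smul]
      abel
    rw [hA, sub_mul, BB_zero' N lst zro, zero_sub, smul_mul_assoc]
    have hTB : (∑ a : Fin N, fd N a) * (fd N lst + fd N zro)
        = -((fd N lst + fd N zro) * ∑ a : Fin N, fd N a) := by
      rw [mul_add, add_mul, Fd1_anticomm, Fd1_anticomm]
      abel
    rw [hTB, smul_neg, neg_neg, Fdg_one]

lemma anti_fd_f (m a : Fin N) :
    fd N m * f N a + f N a * fd N m = (if a = m then eps m else 0) • (1 : Op N) := by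
  rw [fd_mul_f]
  abel

lemma comm_fd_mul (m : Fin N) (A F : Op N) :
    fd N m * (A * F) - (A * F) * fd N m
      = (fd N m * A + A * fd N m) * F - A * (fd N m * F + F * fd N m) := by
  noncomm_ring

lemma one_ne_zero_op (hN : 0 < N) : (1 : Op N) ≠ 0 := by
  intro h
  have h2 : (1 : Op N) (fun _ => 0) (fun _ => 0) = (0 : Op N) (fun _ => 0) (fun _ => 0) := by
    rw [h]
  rw [Matrix.one_apply_eq, Matrix.zero_apply] at h2
  exact one_ne_zero h2

lemma nonzero (hN : 4 ≤ N) :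
    (-2 : ℂ) • ((f N ⟨N - 1, by omega⟩ + f N ⟨0, by omega⟩) * Fg N 1) ≠ 0 := by
  set lst : Fin N := ⟨N - 1, by omega⟩ with hlst
  set zro : Fin N := ⟨0, by omega⟩ with hzro
  set one : Fin N := ⟨1, by omega⟩ with hone
  intro h
  have hY : (f N lst + f N zro) * Fg N 1 = 0 := (smul_eq_zero.mp h).resolve_left (by norm_num)
  set A : Op N := f N lst + f N zro with hA
  have hne1 : lst ≠ one := by
    intro hc
    have := congrArg Fin.val hc
    simp only [hlst, hone] at this
    omega
  have hne2 : zro ≠ one := by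
    intro hc
    have := congrArg Fin.val hc
    simp only [hzro, hone] at this
    omega
  have hantiA : fd N one * A + A * fd N one = 0 := by
    rw [hA, mul_add, add_mul, show
      fd N one * f N lst + fd N one * f N zro + (f N lst * fd N one + f N zro * fd N one)
        = (fd N one * f N lst + f N lst * fd N one)
          + (fd N one * f N zro + f N zro * fd N one) by abel,
      anti_fd_f, anti_fd_f, if_neg hne1, if_neg hne2]
    simp
  have hantiF : fd N one * Fg N 1 + Fg N 1 * fd N one = (1 : Op N) := by
    rw [Fg_one, Finset.mul_sum, Finset.sum_mul, ← Finset.sum_add_distrib]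
    simp only [anti_fd_f]
    simp only [ite_smul, zero_smul]
    rw [Finset.sum_ite_eq' Finset.univ one (fun _ => eps one • (1 : Op N)),
      if_pos (Finset.mem_univ one)]
    have : eps one = 1 := by
      rw [eps]
      show ((-1 : ℂ)) ^ (1 + 1) = 1
      norm_num
    rw [this, one_smul]
  have hAzero : A = 0 := by
    have hc := comm_fd_mul N one A (Fg N 1)
    rw [hY, mul_zero, zero_mul, sub_zero, hantiA, hantiF, zero_mul, mul_one] at hc
    rw [zero_sub] at hc
    exact neg_eq_zero.mp hc.symm
  have hantiA0 : fd N zro * A + A * fd N zro = -(1 : Op N) := by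
    rw [hA, mul_add, add_mul, show
      fd N zro * f N lst + fd N zro * f N zro + (f N lst * fd N zro + f N zro * fd N zro)
        = (fd N zro * f N lst + f N lst * fd N zro)
          + (fd N zro * f N zro + f N zro * fd N zro) by abel,
      anti_fd_f, anti_fd_f, if_pos rfl]
    have hne3 : lst ≠ zro := by
      intro hc
      have := congrArg Fin.val hc
      simp only [hlst, hzro] at this
      omega
    rw [if_neg hne3]
    have : eps zro = -1 := by simp [eps, hzro]
    rw [this]
    simp
  rw [hAzero, mul_zero, zero_mul, add_zero] at hantiA0
  exact one_ne_zero_op N (by omega) (by rw [← neg_neg (1 : Op N), ← hantiA0]; simp)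


/-- **The quadratic quantum-group generators `F_(2)`, `F†_(2)` commute with all bulk
Temperley–Lieb generators but not with the boundary one**, with explicit
obstruction: `[e_j, F_(2)] = 0 = [e_j, F†_(2)]` for `1 ≤ j ≤ N−1`, while
`[e_N, F_(2)] = −2(f_N + f_1)F_(1)` and `[e_N, F†_(2)] = 2(f_N† + f_1†)F†_(1)`;
the former is nonzero as soon as `L ≥ 2`. -/
theorem gl11_quadratic_generator_commutators (L : ℕ) (hL : 0 < L) :
    (∀ j : Fin (2 * L), (j : ℕ) + 1 ≤ 2 * L - 1 →
      ⁅e (2 * L) j, Fg (2 * L) 2⁆ = 0 ∧ ⁅e (2 * L) j, Fdg (2 * L) 2⁆ = 0) ∧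
    ⁅e (2 * L) ⟨2 * L - 1, by omega⟩, Fg (2 * L) 2⁆ =
      (-2 : ℂ) • ((f (2 * L) ⟨2 * L - 1, by omega⟩ + f (2 * L) ⟨0, by omega⟩) * Fg (2 * L) 1) ∧
    ⁅e (2 * L) ⟨2 * L - 1, by omega⟩, Fdg (2 * L) 2⁆ =
      (2 : ℂ) • ((fd (2 * L) ⟨2 * L - 1, by omega⟩ + fd (2 * L) ⟨0, by omega⟩) * Fdg (2 * L) 1) ∧
    (2 ≤ L → ⁅e (2 * L) ⟨2 * L - 1, by omega⟩, Fg (2 * L) 2⁆ ≠ 0) := by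
  have hpow : ((-1 : ℂ)) ^ (2 * L) = 1 := by rw [pow_mul]; norm_num
  refine ⟨?_, ?_, ?_, ?_⟩
  · intro j hj
    have hj2 : (j : ℕ) + 1 < 2 * L := by omega
    obtain ⟨h1, h2⟩ := bulk (2 * L) j hj2
    exact ⟨by rw [Ring.lie_def]; exact h1, by rw [Ring.lie_def]; exact h2⟩
  · rw [Ring.lie_def]
    exact (boundary (2 * L) (by omega) hpow).1
  · rw [Ring.lie_def]
    exact (boundary (2 * L) (by omega) hpow).2
  · intro hL2
    rw [Ring.lie_def, (boundary (2 * L) (by omega) hpow).1]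
    exact nonzero (2 * L) (by omega)

end SpinChain

end
end
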